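/- arXiv:1711.10202 — 3 statements merged into one kernel-verified Lean document; each statement's English description precedes it below -/
import Mathlib

section
/- There exists a constant C > 0 such that for every n ≥ 1, E[∑_{x∈ℤ^d} N_n(x)^4] ≤ C·n, where N_n(x) is the occupation time of the transient random walk (S_n). -/
open MeasureTheory ProbabilityTheory Filter Real

section AuxRW

variable {Ω E : Type*} [MeasurableSpace Ω] [MeasurableSpace E] [AddCommGroup E]
    [MeasurableSingletonClass E] [Countable E] [MeasurableAdd₂ E]
    (P : Measure Ω) [IsProbabilityMeasure P]

set_option linter.unusedSectionVars false

lemma aux_map_add {f g f' g' : Ω → E} (hf : Measurable f) (hg : Measurable g)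
    (hf' : Measurable f') (hg' : Measurable g')
    (h : IndepFun f g P) (h' : IndepFun f' g' P)
    (h1 : Measure.map f P = Measure.map f' P) (h2 : Measure.map g P = Measure.map g' P) :
    Measure.map (fun ω => f ω + g ω) P = Measure.map (fun ω => f' ω + g' ω) P := by
  have hadd : Measurable (fun p : E × E => p.1 + p.2) := measurable_add
  have e1 : (fun ω => f ω + g ω) = (fun p : E × E => p.1 + p.2) ∘ (fun ω => (f ω, g ω)) := rfl
  have e2 : (fun ω => f' ω + g' ω) = (fun p : E × E => p.1 + p.2) ∘ (fun ω => (f' ω, g' ω)) := rfl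
  rw [e1, e2, ← Measure.map_map hadd (hf.prodMk hg), ← Measure.map_map hadd (hf'.prodMk hg'),
    (indepFun_iff_map_prod_eq_prod_map_map hf.aemeasurable hg.aemeasurable).mp h,
    (indepFun_iff_map_prod_eq_prod_map_map hf'.aemeasurable hg'.aemeasurable).mp h',
    h1, h2]

lemma aux_shift (X : ℕ → Ω → E) (hmeas : ∀ i, Measurable (X i))
    (hindep : iIndepFun X P)
    (hident : ∀ i, Measure.map (X i) P = Measure.map (X 0) P)
    (a : ℕ) : ∀ m, Measure.map (fun ω => ∑ i ∈ Finset.range m, X (a + i) ω) P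
      = Measure.map (fun ω => ∑ i ∈ Finset.range m, X i ω) P := by
  intro m
  induction m with
  | zero => simp
  | succ m ih =>
    have hsum : ∀ s : Finset ℕ, Measurable (fun ω => ∑ i ∈ s, X i ω) :=
      fun s => Finset.measurable_sum _ (fun i _ => hmeas i)
    have hsum' : ∀ m, Measurable (fun ω => ∑ i ∈ Finset.range m, X (a + i) ω) :=
      fun m => Finset.measurable_sum _ (fun i _ => hmeas _)
    have hne : a + m ∉ (Finset.range m).image (fun i => a + i) := by
      simp only [Finset.mem_image, Finset.mem_range]
      rintro ⟨i, hi, hia⟩; omega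
    have h1 : IndepFun (fun ω => ∑ i ∈ Finset.range m, X (a + i) ω) (X (a + m)) P := by
      have := hindep.indepFun_finset_sum_of_notMem hmeas hne
      have heq : (∑ j ∈ (Finset.range m).image (fun i => a + i), X j)
          = (fun ω => ∑ i ∈ Finset.range m, X (a + i) ω) := by
        funext ω
        rw [Finset.sum_apply]
        exact Finset.sum_image (fun x _ y _ h => by omega)
      rwa [heq] at this
    have h2 : IndepFun (fun ω => ∑ i ∈ Finset.range m, X i ω) (X m) P := by
      have := hindep.indepFun_finset_sum_of_notMem hmeas (Finset.notMem_range_self (n := m))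
      have heq : (∑ j ∈ Finset.range m, X j) = (fun ω => ∑ i ∈ Finset.range m, X i ω) := by
        funext ω; rw [Finset.sum_apply]
      rwa [heq] at this
    simp only [Finset.sum_range_succ]
    exact aux_map_add P (hsum' m) (hmeas _) (hsum (Finset.range m)) (hmeas m) h1 h2 ih
      (by rw [hident (a + m), hident m])

lemma aux_sum_if_lt (X : ℕ → Ω → E) {a b c : ℕ} (hab : a ≤ b) (hbc : b ≤ c) (ω : Ω) :
    (∑ i ∈ (Finset.Ico a c).attach, if (i : ℕ) < b then X i ω else 0)
      = ∑ i ∈ Finset.Ico a b, X i ω := by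
  rw [Finset.sum_attach (Finset.Ico a c) (fun i => if i < b then X i ω else 0),
    Finset.sum_ite, Finset.sum_const_zero, add_zero]
  congr 1
  rw [Finset.Ico_filter_lt a c b, min_eq_right hbc]

lemma aux_sum_if_ge (X : ℕ → Ω → E) {a b c : ℕ} (hab : a ≤ b) (ω : Ω) :
    (∑ i ∈ (Finset.Ico a c).attach, if ¬ (i : ℕ) < b then X i ω else 0)
      = ∑ i ∈ Finset.Ico b c, X i ω := by
  rw [Finset.sum_attach (Finset.Ico a c) (fun i => if ¬ i < b then X i ω else 0),
    Finset.sum_ite, Finset.sum_const_zero, add_zero]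
  congr 1
  rw [show ((Finset.Ico a c).filter fun i => ¬ i < b) = ((Finset.Ico a c).filter fun i => b ≤ i) by
    apply Finset.filter_congr; intro x _; simp [not_lt],
    Finset.Ico_filter_le a c b, max_eq_right hab]

lemma aux_indep_pair (X : ℕ → Ω → E) (hmeas : ∀ i, Measurable (X i))
    (hindep : iIndepFun X P) {s t : Finset ℕ} (hst : Disjoint s t) :
    IndepFun (fun ω => ∑ i ∈ s, X i ω) (fun ω => ∑ i ∈ t, X i ω) P := by
  have h := hindep.indepFun_finset s t hst hmeas
  have hg : ∀ u : Finset ℕ, Measurable (fun v : {x // x ∈ u} → E => ∑ i : {x // x ∈ u}, v i) :=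
    fun u => measurable_of_countable _
  have := h.comp (hg s) (hg t)
  have e : ∀ u : Finset ℕ, ((fun v : {x // x ∈ u} → E => ∑ i : {x // x ∈ u}, v i)
      ∘ (fun ω (i : {x // x ∈ u}) => X i ω)) = fun ω => ∑ i ∈ u, X i ω := by
    intro u; funext ω
    simp only [Function.comp_apply]
    exact Finset.sum_attach u (fun i => X i ω)
  rwa [e s, e t] at this

lemma aux_indep_pair_triple (X : ℕ → Ω → E) (hmeas : ∀ i, Measurable (X i))
    (hindep : iIndepFun X P)
    {a b c d : ℕ} (hab : a ≤ b) (hbc : b ≤ c) (hcd : c ≤ d) :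
    IndepFun (fun ω => (∑ i ∈ Finset.Ico a b, X i ω, ∑ i ∈ Finset.Ico b c, X i ω))
      (fun ω => ∑ i ∈ Finset.Ico c d, X i ω) P := by
  have h := hindep.indepFun_finset (Finset.Ico a c) (Finset.Ico c d)
    (by apply Finset.Ico_disjoint_Ico_consecutive) hmeas
  have hg1 : Measurable (fun v : {x // x ∈ Finset.Ico a c} → E =>
      ((∑ i : {x // x ∈ Finset.Ico a c}, if (i : ℕ) < b then v i else 0),
       (∑ i : {x // x ∈ Finset.Ico a c}, if ¬ (i : ℕ) < b then v i else 0))) :=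
    measurable_of_countable _
  have hg2 : Measurable (fun v : {x // x ∈ Finset.Ico c d} → E => ∑ i : {x // x ∈ Finset.Ico c d}, v i) :=
    measurable_of_countable _
  have := h.comp hg1 hg2
  have e1 : ((fun v : {x // x ∈ Finset.Ico a c} → E =>
      ((∑ i : {x // x ∈ Finset.Ico a c}, if (i : ℕ) < b then v i else 0),
       (∑ i : {x // x ∈ Finset.Ico a c}, if ¬ (i : ℕ) < b then v i else 0)))
      ∘ (fun ω (i : {x // x ∈ Finset.Ico a c}) => X i ω))
      = fun ω => (∑ i ∈ Finset.Ico a b, X i ω, ∑ i ∈ Finset.Ico b c, X i ω) := by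
    funext ω
    simp only [Function.comp_apply, Prod.mk.injEq]
    exact ⟨aux_sum_if_lt X hab hbc ω, aux_sum_if_ge X hab ω⟩
  have e2 : ((fun v : {x // x ∈ Finset.Ico c d} → E => ∑ i : {x // x ∈ Finset.Ico c d}, v i)
      ∘ (fun ω (i : {x // x ∈ Finset.Ico c d}) => X i ω)) = fun ω => ∑ i ∈ Finset.Ico c d, X i ω := by
    funext ω
    exact Finset.sum_attach _ (fun i => X i ω)
  rwa [e1, e2] at this

lemma aux_triple_prod (X : ℕ → Ω → E) (hmeas : ∀ i, Measurable (X i))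
    (hindep : iIndepFun X P)
    {a b c d : ℕ} (hab : a ≤ b) (hbc : b ≤ c) (hcd : c ≤ d) :
    P {ω | (∑ i ∈ Finset.Ico a b, X i ω) = 0 ∧ (∑ i ∈ Finset.Ico b c, X i ω) = 0
        ∧ (∑ i ∈ Finset.Ico c d, X i ω) = 0}
      = P {ω | (∑ i ∈ Finset.Ico a b, X i ω) = 0} * P {ω | (∑ i ∈ Finset.Ico b c, X i ω) = 0}
        * P {ω | (∑ i ∈ Finset.Ico c d, X i ω) = 0} := by
  have h3 := (aux_indep_pair_triple P X hmeas hindep hab hbc hcd).measure_inter_preimage_eq_mul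
    {((0 : E), (0 : E))} {(0 : E)} (measurableSet_singleton _) (measurableSet_singleton _)
  have h2 := (aux_indep_pair P X hmeas hindep
    (Finset.Ico_disjoint_Ico_consecutive a b c)).measure_inter_preimage_eq_mul
    {(0 : E)} {(0 : E)} (measurableSet_singleton _) (measurableSet_singleton _)
  have e3 : {ω | (∑ i ∈ Finset.Ico a b, X i ω) = 0 ∧ (∑ i ∈ Finset.Ico b c, X i ω) = 0
        ∧ (∑ i ∈ Finset.Ico c d, X i ω) = 0}
      = ((fun ω => (∑ i ∈ Finset.Ico a b, X i ω, ∑ i ∈ Finset.Ico b c, X i ω)) ⁻¹'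
          {((0 : E), (0 : E))}) ∩ ((fun ω => ∑ i ∈ Finset.Ico c d, X i ω) ⁻¹' {(0 : E)}) := by
    ext ω; simp [Prod.ext_iff, and_assoc]
  have e2 : ((fun ω => (∑ i ∈ Finset.Ico a b, X i ω, ∑ i ∈ Finset.Ico b c, X i ω)) ⁻¹'
          {((0 : E), (0 : E))})
      = ((fun ω => ∑ i ∈ Finset.Ico a b, X i ω) ⁻¹' {(0 : E)}) ∩
        ((fun ω => ∑ i ∈ Finset.Ico b c, X i ω) ⁻¹' {(0 : E)}) := by
    ext ω; simp [Prod.ext_iff]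
  rw [e3, h3, e2, h2]
  rfl

end AuxRW

open Finset in
lemma aux_sort (I : Finset ℕ) (r : (Fin 4 → ℕ) → ℝ) (hr0 : ∀ v, 0 ≤ r v)
    (hinv : ∀ v : Fin 4 → ℕ, r (v ∘ Tuple.sort v) = r v) :
    ∑ v ∈ Fintype.piFinset (fun _ : Fin 4 => I), r v
      ≤ 256 * ∑ w ∈ (Fintype.piFinset (fun _ : Fin 4 => I)).filter (fun w => Monotone w), r w := by
  classical
  set s := Fintype.piFinset (fun _ : Fin 4 => I) with hs
  set φ : (Fin 4 → ℕ) → (Fin 4 → ℕ) := fun v => v ∘ Tuple.sort v with hφ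
  have h1 : ∑ v ∈ s, r v = ∑ v ∈ s, r (φ v) := Finset.sum_congr rfl (fun v _ => (hinv v).symm)
  rw [h1, Finset.sum_comp r φ]
  have himg : s.image φ ⊆ s.filter (fun w => Monotone w) := by
    intro w hw
    rw [Finset.mem_image] at hw
    obtain ⟨v, hv, rfl⟩ := hw
    rw [Finset.mem_filter]
    refine ⟨?_, Tuple.monotone_sort v⟩
    rw [hs, Fintype.mem_piFinset] at hv ⊢
    intro m; exact hv _
  calc ∑ w ∈ s.image φ, #{v ∈ s | φ v = w} • r w
      ≤ ∑ w ∈ s.image φ, 256 * r w := by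
        apply Finset.sum_le_sum
        intro w hw
        rw [nsmul_eq_mul]
        apply mul_le_mul_of_nonneg_right _ (hr0 w)
        have hcard : #{v ∈ s | φ v = w} ≤ 256 := by
          have hsub : {v ∈ s | φ v = w} ⊆ Fintype.piFinset (fun _ : Fin 4 => Finset.image w Finset.univ) := by
            intro v hv
            rw [Finset.mem_filter] at hv
            obtain ⟨hvs, hvw⟩ := hv
            rw [Fintype.mem_piFinset]
            intro m
            rw [Finset.mem_image]
            refine ⟨(Tuple.sort v)⁻¹ m, Finset.mem_univ _, ?_⟩
            rw [← hvw]
            simp [hφ]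
          calc #{v ∈ s | φ v = w} ≤ (Fintype.piFinset (fun _ : Fin 4 => Finset.image w Finset.univ)).card :=
                Finset.card_le_card hsub
            _ = ∏ _m : Fin 4, (Finset.image w Finset.univ).card := Fintype.card_piFinset _
            _ ≤ ∏ _m : Fin 4, 4 := Finset.prod_le_prod' (fun m _ => by
                calc (Finset.image w Finset.univ).card ≤ (Finset.univ : Finset (Fin 4)).card :=
                    Finset.card_image_le
                  _ = 4 := by simp)
            _ = 256 := by norm_num
        exact_mod_cast hcard
    _ ≤ ∑ w ∈ s.filter (fun w => Monotone w), 256 * r w := by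
        apply Finset.sum_le_sum_of_subset_of_nonneg himg
        intro w _ _
        exact mul_nonneg (by norm_num) (hr0 w)
    _ = 256 * ∑ w ∈ s.filter (fun w => Monotone w), r w := by rw [Finset.mul_sum]

open Finset in
lemma aux_mono_sum (n : ℕ) (q : ℕ → ℝ) (hq0 : ∀ u, 0 ≤ q u) (K : ℝ)
    (hK : ∑ u ∈ Finset.range (n + 1), q u ≤ K)
    (r : (Fin 4 → ℕ) → ℝ)
    (hr : ∀ w ∈ (Fintype.piFinset (fun _ : Fin 4 => Finset.Icc 1 n)).filter (fun w => Monotone w),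
      r w ≤ q (w 1 - w 0) * q (w 2 - w 1) * q (w 3 - w 2)) :
    ∑ w ∈ (Fintype.piFinset (fun _ : Fin 4 => Finset.Icc 1 n)).filter (fun w => Monotone w), r w
      ≤ (n : ℝ) * K ^ 3 := by
  classical
  set M := (Fintype.piFinset (fun _ : Fin 4 => Finset.Icc 1 n)).filter (fun w => Monotone w) with hM
  set ψ : (Fin 4 → ℕ) → ℕ × ℕ × ℕ × ℕ := fun w => (w 0, w 1 - w 0, w 2 - w 1, w 3 - w 2) with hψ
  set h : ℕ × ℕ × ℕ × ℕ → ℝ := fun z => q z.2.1 * q z.2.2.1 * q z.2.2.2 with hh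
  have hmono : ∀ w ∈ M, w 0 ≤ w 1 ∧ w 1 ≤ w 2 ∧ w 2 ≤ w 3 := by
    intro w hw
    rw [hM, Finset.mem_filter] at hw
    exact ⟨hw.2 (by decide), hw.2 (by decide), hw.2 (by decide)⟩
  have step1 : ∑ w ∈ M, r w ≤ ∑ w ∈ M, h (ψ w) := Finset.sum_le_sum (fun w hw => hr w hw)
  have hinj : Set.InjOn ψ M := by
    intro w hw w' hw' he
    have h1 := hmono w hw; have h2 := hmono w' hw'
    obtain ⟨a1, a2, a3⟩ := h1
    obtain ⟨b1, b2, b3⟩ := h2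
    rw [hψ] at he
    simp only [Prod.mk.injEq] at he
    obtain ⟨e1, e2, e3, e4⟩ := he
    funext m
    fin_cases m
    · show w 0 = w' 0; omega
    · show w 1 = w' 1; omega
    · show w 2 = w' 2; omega
    · show w 3 = w' 3; omega
  have step2 : ∑ w ∈ M, h (ψ w) = ∑ z ∈ M.image ψ, h z :=
    (Finset.sum_image (fun x hx y hy hxy => hinj hx hy hxy)).symm
  have hsub : M.image ψ ⊆ Finset.Icc 1 n ×ˢ (Finset.range (n+1) ×ˢ (Finset.range (n+1) ×ˢ Finset.range (n+1))) := by
    intro z hz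
    rw [Finset.mem_image] at hz
    obtain ⟨w, hw, rfl⟩ := hz
    have hmem : ∀ m, w m ∈ Finset.Icc 1 n := by
      rw [hM, Finset.mem_filter, Fintype.mem_piFinset] at hw
      exact fun m => hw.1 m
    have h0 := hmem 0; have h1' := hmem 1; have h2' := hmem 2; have h3' := hmem 3
    rw [Finset.mem_Icc] at h0 h1' h2' h3'
    simp only [Finset.mem_product, Finset.mem_Icc, Finset.mem_range]
    exact ⟨⟨h0.1, h0.2⟩, by simp only [hψ]; omega, by simp only [hψ]; omega, by simp only [hψ]; omega⟩
  have step3 : ∑ z ∈ M.image ψ, h z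
      ≤ ∑ z ∈ Finset.Icc 1 n ×ˢ (Finset.range (n+1) ×ˢ (Finset.range (n+1) ×ˢ Finset.range (n+1))), h z := by
    apply Finset.sum_le_sum_of_subset_of_nonneg hsub
    intro z _ _
    exact mul_nonneg (mul_nonneg (hq0 _) (hq0 _)) (hq0 _)
  have step4 : ∑ z ∈ Finset.Icc 1 n ×ˢ (Finset.range (n+1) ×ˢ (Finset.range (n+1) ×ˢ Finset.range (n+1))), h z
      = (n : ℝ) * (∑ u ∈ Finset.range (n+1), q u) ^ 3 := by
    rw [Finset.sum_product]
    simp only [hh, Finset.sum_product]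
    simp only [← Finset.sum_mul, ← Finset.mul_sum]
    rw [Finset.sum_const, Nat.card_Icc]
    simp only [nsmul_eq_mul]
    push_cast
    ring
  have hKnn : 0 ≤ ∑ u ∈ Finset.range (n+1), q u := Finset.sum_nonneg (fun u _ => hq0 u)
  calc ∑ w ∈ M, r w ≤ ∑ w ∈ M, h (ψ w) := step1
    _ = ∑ z ∈ M.image ψ, h z := step2
    _ ≤ _ := step3
    _ = (n : ℝ) * (∑ u ∈ Finset.range (n+1), q u) ^ 3 := step4
    _ ≤ (n : ℝ) * K ^ 3 := by
        apply mul_le_mul_of_nonneg_left _ (Nat.cast_nonneg n)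
        exact pow_le_pow_left₀ hKnn hK 3

theorem stmt_0
    {Ω : Type*} [MeasurableSpace Ω] (P : Measure Ω) [IsProbabilityMeasure P]
    (d : ℕ) (hd : 1 ≤ d)
    (X : ℕ → Ω → (Fin d → ℤ))
    (hmeas : ∀ i, Measurable (X i))
    (hindep : iIndepFun X P)
    (hident : ∀ i, Measure.map (X i) P = Measure.map (X 0) P)
    (S : ℕ → Ω → (Fin d → ℤ))
    (hS : ∀ n ω, S n ω = ∑ i ∈ Finset.range n, X i ω)
    (htrans : ∑' n : ℕ, P {ω | S (n + 1) ω = 0} < ⊤)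
    (N : ℕ → (Fin d → ℤ) → Ω → ℝ)
    (hN : ∀ n x ω, N n x ω = ∑ i ∈ Finset.Icc 1 n, if S i ω = x then (1 : ℝ) else 0)
 :
    ∃ C > 0, ∀ n : ℕ, 1 ≤ n →
      ∫ ω, (∑' x : Fin d → ℤ, (N n x ω) ^ 4) ∂P ≤ C * n := by
  classical
  have hSmeas : ∀ i, Measurable (S i) := by
    intro i
    have : S i = fun ω => ∑ j ∈ Finset.range i, X j ω := funext (hS i)
    rw [this]
    exact Finset.measurable_sum _ (fun j _ => hmeas j)
  -- the all-equal event
  set A : (Fin 4 → ℕ) → Set Ω := fun v => {ω | ∀ m, S (v m) ω = S (v 0) ω} with hA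
  have hAmeas : ∀ v, MeasurableSet (A v) := by
    intro v
    have : A v = ⋂ m : Fin 4, {ω | S (v m) ω = S (v 0) ω} := by
      ext ω; simp [hA, Set.mem_iInter]
    rw [this]
    exact MeasurableSet.iInter (fun m => measurableSet_eq_fun (hSmeas _) (hSmeas _))
  have hAperm : ∀ (v : Fin 4 → ℕ) (σ : Equiv.Perm (Fin 4)), A (v ∘ σ) = A v := by
    intro v σ
    ext ω
    simp only [hA, Set.mem_setOf_eq, Function.comp_apply]
    constructor
    · intro h m
      have key : S (v 0) ω = S (v (σ 0)) ω := by
        have := h (σ⁻¹ 0)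
        rwa [← Equiv.Perm.mul_apply, mul_inv_cancel, Equiv.Perm.one_apply] at this
      calc S (v m) ω = S (v (σ (σ⁻¹ m))) ω := by rw [← Equiv.Perm.mul_apply, mul_inv_cancel, Equiv.Perm.one_apply]
        _ = S (v (σ 0)) ω := h _
        _ = S (v 0) ω := key.symm
    · intro h m
      exact (h (σ m)).trans (h (σ 0)).symm
  -- pointwise expansion of the tsum
  have hpt : ∀ n ω, (∑' x : Fin d → ℤ, (N n x ω) ^ 4)
      = ∑ v ∈ Fintype.piFinset (fun _ : Fin 4 => Finset.Icc 1 n),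
          (A v).indicator (fun _ => (1:ℝ)) ω := by
    intro n ω
    have h1 : ∀ x : Fin d → ℤ, (N n x ω) ^ 4
        = ∑ v ∈ Fintype.piFinset (fun _ : Fin 4 => Finset.Icc 1 n),
            ∏ m : Fin 4, (if S (v m) ω = x then (1:ℝ) else 0) := by
      intro x
      rw [hN]
      rw [← Finset.prod_univ_sum (fun _ : Fin 4 => Finset.Icc 1 n)
        (fun _ i => if S i ω = x then (1:ℝ) else 0)]
      rw [Finset.prod_const]
      simp
    have hrepr : ∀ v : Fin 4 → ℕ,
        (fun x : Fin d → ℤ => ∏ m : Fin 4, (if S (v m) ω = x then (1:ℝ) else 0))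
        = fun x => if x = S (v 0) ω then (A v).indicator (fun _ => (1:ℝ)) ω else 0 := by
      intro v
      funext x
      by_cases hx : x = S (v 0) ω
      · rw [if_pos hx]
        by_cases hω : ω ∈ A v
        · rw [Set.indicator_of_mem hω]
          exact Finset.prod_eq_one (fun m _ => if_pos ((hω m).trans hx.symm))
        · rw [Set.indicator_of_notMem hω]
          rw [hA] at hω
          simp only [Set.mem_setOf_eq, not_forall] at hω
          obtain ⟨m, hm⟩ := hω
          exact Finset.prod_eq_zero (Finset.mem_univ m)
            (if_neg (fun hc => hm (hc.trans hx)))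
      · rw [if_neg hx]
        exact Finset.prod_eq_zero (Finset.mem_univ (0 : Fin 4))
          (if_neg (fun hc => hx hc.symm))
    calc (∑' x : Fin d → ℤ, (N n x ω) ^ 4)
        = ∑' x : Fin d → ℤ, ∑ v ∈ Fintype.piFinset (fun _ : Fin 4 => Finset.Icc 1 n),
            ∏ m : Fin 4, (if S (v m) ω = x then (1:ℝ) else 0) := tsum_congr h1
      _ = ∑ v ∈ Fintype.piFinset (fun _ : Fin 4 => Finset.Icc 1 n),
            ∑' x : Fin d → ℤ, ∏ m : Fin 4, (if S (v m) ω = x then (1:ℝ) else 0) := by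
          apply Summable.tsum_finsetSum
          intro v _
          rw [hrepr v]
          exact ⟨_, hasSum_ite_eq _ _⟩
      _ = ∑ v ∈ Fintype.piFinset (fun _ : Fin 4 => Finset.Icc 1 n),
            (A v).indicator (fun _ => (1:ℝ)) ω := by
          refine Finset.sum_congr rfl (fun v _ => ?_)
          rw [hrepr v]
          exact tsum_ite_eq _ _
  -- integral computation
  have hint : ∀ n : ℕ, ∫ ω, (∑' x : Fin d → ℤ, (N n x ω) ^ 4) ∂P
      = ∑ v ∈ Fintype.piFinset (fun _ : Fin 4 => Finset.Icc 1 n), (P (A v)).toReal := by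
    intro n
    rw [integral_congr_ae (Filter.Eventually.of_forall (hpt n))]
    rw [integral_finset_sum _ (fun v _ => (integrable_const (1:ℝ)).indicator (hAmeas v))]
    refine Finset.sum_congr rfl (fun v _ => ?_)
    rw [integral_indicator_const (1:ℝ) (hAmeas v), smul_eq_mul, mul_one, measureReal_def]
  -- increments
  have hsplit : ∀ (a b : ℕ) (ω : Ω), a ≤ b →
      (S b ω = S a ω ↔ (∑ i ∈ Finset.Ico a b, X i ω) = 0) := by
    intro a b ω hab
    rw [hS b ω, hS a ω, Finset.range_eq_Ico,
      ← Finset.sum_Ico_consecutive (fun i => X i ω) (Nat.zero_le a) hab]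
    rw [Finset.range_eq_Ico]; exact add_eq_left
  set p : ℕ → ENNReal := fun m => P {ω | (∑ i ∈ Finset.range m, X i ω) = 0} with hp
  have hp0 : p 0 = 1 := by
    have : {ω | (∑ i ∈ Finset.range 0, X i ω) = 0} = Set.univ := by
      ext ω; simp
    rw [hp]; simp only [this, measure_univ]
  have hinc : ∀ a b : ℕ, a ≤ b →
      P {ω | (∑ i ∈ Finset.Ico a b, X i ω) = 0} = p (b - a) := by
    intro a b hab
    have hre : ∀ ω : Ω, (∑ i ∈ Finset.Ico a b, X i ω)
        = ∑ i ∈ Finset.range (b - a), X (a + i) ω :=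
      fun ω => Finset.sum_Ico_eq_sum_range (fun i => X i ω) a b
    have hmap := aux_shift P X hmeas hindep hident a (b - a)
    have hf : Measurable fun ω => ∑ i ∈ Finset.range (b - a), X (a + i) ω :=
      Finset.measurable_sum _ fun i _ => hmeas _
    have hg : Measurable fun ω => ∑ i ∈ Finset.range (b - a), X i ω :=
      Finset.measurable_sum _ fun i _ => hmeas _
    calc P {ω | (∑ i ∈ Finset.Ico a b, X i ω) = 0}
        = P ((fun ω => ∑ i ∈ Finset.range (b - a), X (a + i) ω) ⁻¹' {0}) := by
          have hset : {ω | (∑ i ∈ Finset.Ico a b, X i ω) = 0}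
              = (fun ω => ∑ i ∈ Finset.range (b - a), X (a + i) ω) ⁻¹' {0} := by
            ext ω; simp [hre ω]
          rw [hset]
      _ = Measure.map (fun ω => ∑ i ∈ Finset.range (b - a), X (a + i) ω) P {0} :=
          (Measure.map_apply hf (measurableSet_singleton 0)).symm
      _ = Measure.map (fun ω => ∑ i ∈ Finset.range (b - a), X i ω) P {0} := by rw [hmap]
      _ = P ((fun ω => ∑ i ∈ Finset.range (b - a), X i ω) ⁻¹' {0}) :=
          Measure.map_apply hg (measurableSet_singleton 0)
      _ = p (b - a) := by
          have hset : ((fun ω => ∑ i ∈ Finset.range (b - a), X i ω) ⁻¹' {0})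
              = {ω | (∑ i ∈ Finset.range (b - a), X i ω) = 0} := by
            ext ω; simp
          rw [hset]
  have hPA : ∀ w : Fin 4 → ℕ, Monotone w →
      P (A w) = p (w 1 - w 0) * p (w 2 - w 1) * p (w 3 - w 2) := by
    intro w hw
    have h01 : w 0 ≤ w 1 := hw (by decide)
    have h12 : w 1 ≤ w 2 := hw (by decide)
    have h23 : w 2 ≤ w 3 := hw (by decide)
    have hAeq : A w = {ω | (∑ i ∈ Finset.Ico (w 0) (w 1), X i ω) = 0
        ∧ (∑ i ∈ Finset.Ico (w 1) (w 2), X i ω) = 0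
        ∧ (∑ i ∈ Finset.Ico (w 2) (w 3), X i ω) = 0} := by
      ext ω
      simp only [hA, Set.mem_setOf_eq]
      rw [← hsplit _ _ ω h01, ← hsplit _ _ ω h12, ← hsplit _ _ ω h23]
      constructor
      · intro h
        exact ⟨h 1, (h 2).trans (h 1).symm, (h 3).trans (h 2).symm⟩
      · rintro ⟨h1, h2, h3⟩ m
        fin_cases m
        · show S (w 0) ω = S (w 0) ω; rfl
        · show S (w 1) ω = S (w 0) ω; exact h1
        · show S (w 2) ω = S (w 0) ω; exact h2.trans h1
        · show S (w 3) ω = S (w 0) ω; exact (h3.trans h2).trans h1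
    rw [hAeq, aux_triple_prod P X hmeas hindep h01 h12 h23,
      hinc _ _ h01, hinc _ _ h12, hinc _ _ h23]
  -- the Green function bound
  set G : ℝ := (∑' k : ℕ, P {ω | S (k + 1) ω = 0}).toReal with hG
  have hG0 : 0 ≤ G := ENNReal.toReal_nonneg
  have hq0 : ∀ u : ℕ, 0 ≤ (p u).toReal := fun u => ENNReal.toReal_nonneg
  have hqsum : ∀ n : ℕ, ∑ u ∈ Finset.range (n + 1), (p u).toReal ≤ 1 + G := by
    intro n
    rw [Finset.sum_range_succ']
    have h0 : (p 0).toReal = 1 := by rw [hp0]; simp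
    rw [h0]
    have hfin : ∀ i ∈ Finset.range n, p (i + 1) ≠ ⊤ := fun i _ => (measure_ne_top P _)
    have hkey : ∑ i ∈ Finset.range n, (p (i + 1)).toReal ≤ G := by
      rw [← ENNReal.toReal_sum hfin]
      apply ENNReal.toReal_mono htrans.ne
      have he : ∀ i : ℕ, p (i + 1) = P {ω | S (i + 1) ω = 0} := by
        intro i
        have hset : {ω | (∑ j ∈ Finset.range (i + 1), X j ω) = 0} = {ω | S (i + 1) ω = 0} := by
          ext ω; rw [Set.mem_setOf_eq, Set.mem_setOf_eq, hS (i + 1) ω]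
        exact congrArg (fun s => P s) hset
      calc ∑ i ∈ Finset.range n, p (i + 1)
          = ∑ i ∈ Finset.range n, P {ω | S (i + 1) ω = 0} :=
            Finset.sum_congr rfl (fun i _ => he i)
        _ ≤ ∑' i : ℕ, P {ω | S (i + 1) ω = 0} := ENNReal.sum_le_tsum _
    linarith
  -- conclusion
  refine ⟨256 * (1 + G) ^ 3, by positivity, ?_⟩
  intro n hn
  rw [hint n]
  have hr0 : ∀ v : Fin 4 → ℕ, 0 ≤ (P (A v)).toReal := fun v => ENNReal.toReal_nonneg
  have hs1 := aux_sort (Finset.Icc 1 n) (fun v => (P (A v)).toReal) hr0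
    (fun v => by simp only [hAperm v (Tuple.sort v)])
  have hs2 := aux_mono_sum n (fun u => (p u).toReal) hq0 (1 + G) (hqsum n)
    (fun v => (P (A v)).toReal)
    (fun w hw => by
      rw [Finset.mem_filter] at hw
      show (P (A w)).toReal ≤ (p (w 1 - w 0)).toReal * (p (w 2 - w 1)).toReal * (p (w 3 - w 2)).toReal
      rw [hPA w hw.2, ENNReal.toReal_mul, ENNReal.toReal_mul])
  calc ∑ v ∈ Fintype.piFinset (fun _ : Fin 4 => Finset.Icc 1 n), (P (A v)).toReal
      ≤ 256 * ∑ w ∈ (Fintype.piFinset (fun _ : Fin 4 => Finset.Icc 1 n)).filter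
          (fun w => Monotone w), (P (A w)).toReal := hs1
    _ ≤ 256 * ((n : ℝ) * (1 + G) ^ 3) := by linarith
    _ = 256 * (1 + G) ^ 3 * n := by ring
end

section
/- For every ε > 0, almost surely n^{−ε}·sup_{x∈ℤ^d} N_n(x) → 0 as n → ∞, where N_n(x) is the occupation time of the transient random walk (S_n). -/
open MeasureTheory ProbabilityTheory Filter Real
open scoped ENNReal

set_option linter.unusedSectionVars false

def tauF' (a : ℕ) (g : ℕ → ℕ) : ℕ → ℕ
  | 0 => a
  | j+1 => tauF' a g j + g j

lemma tauF'_mono (a : ℕ) (g : ℕ → ℕ) : Monotone (tauF' a g) :=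
  monotone_nat_of_le_succ (fun _ => Nat.le_add_right _ _)

def extF (m : ℕ) (g : Fin m → ℕ) : ℕ → ℕ := fun i => if h : i < m then g ⟨i, h⟩ else 0

section AuxAll

variable {Ω : Type*} [MeasurableSpace Ω] {P : Measure Ω} [IsProbabilityMeasure P]
  {d : ℕ}

def EpSet (X : ℕ → Ω → (Fin d → ℤ)) (m : ℕ) (p : ℕ × (Fin m → ℕ)) : Set Ω :=
  ⋂ j ∈ Finset.range m, {ω | ∑ i ∈ Finset.Ico (tauF' p.1 (extF m p.2) j)
    (tauF' p.1 (extF m p.2) (j+1)), X i ω = 0}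

def idxF (m n : ℕ) : Finset (ℕ × (Fin m → ℕ)) :=
  (Finset.Icc 1 n) ×ˢ (Fintype.piFinset fun _ : Fin m => Finset.Icc 1 n)

noncomputable def ZF (X : ℕ → Ω → (Fin d → ℤ)) (m n : ℕ) (ω : Ω) : ℝ≥0∞ :=
  ∑ p ∈ idxF m n, Set.indicator (EpSet X m p) (fun _ => 1) ω

variable {X : ℕ → Ω → (Fin d → ℤ)}

lemma meas_fsum (hmeas : ∀ i, Measurable (X i)) (F : Finset ℕ) :
    Measurable (fun ω => ∑ i ∈ F, X i ω) :=
  Finset.measurable_sum F (fun i _ => hmeas i)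

lemma add_law {f g : Ω → (Fin d → ℤ)} (hf : Measurable f) (hg : Measurable g)
    (h : IndepFun f g P) (s : Set (Fin d → ℤ)) :
    P {ω | f ω + g ω ∈ s} = ∑' y : (Fin d → ℤ), P (f ⁻¹' {y}) * P (g ⁻¹' {z | y + z ∈ s}) := by
  have hU : {ω | f ω + g ω ∈ s} = ⋃ y : (Fin d → ℤ), f ⁻¹' {y} ∩ g ⁻¹' {z | y + z ∈ s} := by
    ext ω
    simp only [Set.mem_setOf_eq, Set.mem_iUnion, Set.mem_inter_iff, Set.mem_preimage,
      Set.mem_singleton_iff]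
    constructor
    · intro hω; exact ⟨f ω, rfl, hω⟩
    · rintro ⟨y, rfl, hω⟩; exact hω
  rw [hU, measure_iUnion]
  · refine tsum_congr fun y => ?_
    rw [indepFun_iff_measure_inter_preimage_eq_mul] at h
    exact h _ _ (measurableSet_singleton y) (Set.to_countable _).measurableSet
  · intro y y' hyy'
    refine Set.disjoint_left.2 fun ω hω hω' => hyy' ?_
    have h1 : f ω = y := hω.1
    have h2 : f ω = y' := hω'.1
    rw [← h1, h2]
  · intro y
    exact (hf (measurableSet_singleton y)).inter (hg (Set.to_countable _).measurableSet)

lemma marginal_eq (hmeas : ∀ i, Measurable (X i))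
    (hident : ∀ i, Measure.map (X i) P = Measure.map (X 0) P) (a b : ℕ) (y : Fin d → ℤ) :
    P (X a ⁻¹' {y}) = P (X b ⁻¹' {y}) := by
  rw [← Measure.map_apply (hmeas a) (measurableSet_singleton y),
    ← Measure.map_apply (hmeas b) (measurableSet_singleton y), hident a, hident b]

lemma sum_law (hmeas : ∀ i, Measurable (X i))
    (hindep : iIndepFun X P)
    (hident : ∀ i, Measure.map (X i) P = Measure.map (X 0) P) :
    ∀ (k : ℕ) (A : Finset ℕ), A.card = k → ∀ s : Set (Fin d → ℤ),
      P {ω | (∑ i ∈ A, X i ω) ∈ s} = P {ω | (∑ i ∈ Finset.range k, X i ω) ∈ s} := by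
  intro k
  induction k with
  | zero =>
    intro A hA s
    rw [Finset.card_eq_zero] at hA
    subst hA
    simp
  | succ k ih =>
    intro A hA s
    obtain ⟨a, ha⟩ := Finset.card_pos.mp (by rw [hA]; exact Nat.succ_pos k)
    have hA' : (A.erase a).card = k := by
      rw [Finset.card_erase_of_mem ha, hA]; rfl
    have hsum : ∀ ω, ∑ i ∈ A, X i ω = X a ω + ∑ i ∈ A.erase a, X i ω := by
      intro ω
      exact (Finset.add_sum_erase _ _ ha).symm
    have hind1 : IndepFun (X a) (∑ i ∈ A.erase a, X i) P :=
      (hindep.indepFun_finsetSum_of_notMem hmeas (Finset.notMem_erase a A)).symm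
    have hind2 : IndepFun (X k) (∑ i ∈ Finset.range k, X i) P :=
      (hindep.indepFun_finsetSum_of_notMem hmeas Finset.notMem_range_self).symm
    have hmg : Measurable (fun ω => ∑ i ∈ A.erase a, X i ω) := meas_fsum hmeas _
    have hmg2 : Measurable (fun ω => ∑ i ∈ Finset.range k, X i ω) := meas_fsum hmeas _
    have hfun1 : (∑ i ∈ A.erase a, X i) = (fun ω => ∑ i ∈ A.erase a, X i ω) := by
      funext ω; simp [Finset.sum_apply]
    have hfun2 : (∑ i ∈ Finset.range k, X i) = (fun ω => ∑ i ∈ Finset.range k, X i ω) := by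
      funext ω; simp [Finset.sum_apply]
    rw [hfun1] at hind1
    rw [hfun2] at hind2
    calc P {ω | (∑ i ∈ A, X i ω) ∈ s}
        = P {ω | X a ω + (∑ i ∈ A.erase a, X i ω) ∈ s} := by
          congr 1; ext ω; rw [Set.mem_setOf_eq, Set.mem_setOf_eq, hsum ω]
      _ = ∑' y : (Fin d → ℤ), P (X a ⁻¹' {y}) *
            P ((fun ω => ∑ i ∈ A.erase a, X i ω) ⁻¹' {z | y + z ∈ s}) :=
          add_law (hmeas a) hmg hind1 s
      _ = ∑' y : (Fin d → ℤ), P (X k ⁻¹' {y}) *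
            P ((fun ω => ∑ i ∈ Finset.range k, X i ω) ⁻¹' {z | y + z ∈ s}) := by
          refine tsum_congr fun y => ?_
          rw [marginal_eq hmeas hident a k y]
          congr 1
          exact ih (A.erase a) hA' {z | y + z ∈ s}
      _ = P {ω | X k ω + (∑ i ∈ Finset.range k, X i ω) ∈ s} :=
          (add_law (hmeas k) hmg2 hind2 s).symm
      _ = P {ω | (∑ i ∈ Finset.range (k+1), X i ω) ∈ s} := by
          congr 1; ext ω
          rw [Set.mem_setOf_eq, Set.mem_setOf_eq, Finset.sum_range_succ_comm]

lemma ico_law (hmeas : ∀ i, Measurable (X i))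
    (hindep : iIndepFun X P)
    (hident : ∀ i, Measure.map (X i) P = Measure.map (X 0) P) (a b : ℕ) :
    P {ω | ∑ i ∈ Finset.Ico a b, X i ω = 0}
      = P {ω | ∑ i ∈ Finset.range (b - a), X i ω = 0} := by
  have := sum_law hmeas hindep hident (b - a) (Finset.Ico a b) (Nat.card_Ico a b) {0}
  simpa using this

lemma prod_law (hmeas : ∀ i, Measurable (X i))
    (hindep : iIndepFun X P)
    (hident : ∀ i, Measure.map (X i) P = Measure.map (X 0) P) (a : ℕ) (g : ℕ → ℕ) :
    ∀ m : ℕ, P (⋂ j ∈ Finset.range m,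
        {ω | ∑ i ∈ Finset.Ico (tauF' a g j) (tauF' a g (j+1)), X i ω = 0})
      = ∏ j ∈ Finset.range m, P {ω | ∑ i ∈ Finset.range (g j), X i ω = 0} := by
  intro m
  induction m with
  | zero => simp
  | succ m ih =>
    rw [Finset.range_add_one, Finset.set_biInter_insert, Finset.prod_insert Finset.notMem_range_self,
      Set.inter_comm]
    set A : Finset ℕ := Finset.range (tauF' a g m) with hA
    set B : Finset ℕ := Finset.Ico (tauF' a g m) (tauF' a g (m+1)) with hB
    -- extension maps
    classical
    set extA : (↥A → (Fin d → ℤ)) → ℕ → (Fin d → ℤ) :=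
      fun v i => if h : i ∈ A then v ⟨i, h⟩ else 0 with hextA
    set extB : (↥B → (Fin d → ℤ)) → ℕ → (Fin d → ℤ) :=
      fun v i => if h : i ∈ B then v ⟨i, h⟩ else 0 with hextB
    set VA : Ω → (↥A → (Fin d → ℤ)) := fun ω i => X i ω with hVA
    set VB : Ω → (↥B → (Fin d → ℤ)) := fun ω i => X i ω with hVB
    have hdisj : Disjoint A B := by
      rw [Finset.disjoint_left]
      intro i hiA hiB
      rw [hA, Finset.mem_range] at hiA
      rw [hB, Finset.mem_Ico] at hiB
      omega
    have hindAB : IndepFun VA VB P := hindep.indepFun_finset A B hdisj hmeas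
    set SA : Set (↥A → (Fin d → ℤ)) :=
      {v | ∀ j < m, ∑ i ∈ Finset.Ico (tauF' a g j) (tauF' a g (j+1)), extA v i = 0} with hSA
    set SB : Set (↥B → (Fin d → ℤ)) :=
      {v | ∑ i ∈ B, extB v i = 0} with hSB
    have keyA : ∀ ω i, i < tauF' a g m → extA (VA ω) i = X i ω := by
      intro ω i hi
      rw [hextA]
      simp only [hVA]
      rw [dif_pos (by rw [hA, Finset.mem_range]; exact hi)]
    have hQ : (⋂ j ∈ Finset.range m,
        {ω | ∑ i ∈ Finset.Ico (tauF' a g j) (tauF' a g (j+1)), X i ω = 0}) = VA ⁻¹' SA := by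
      ext ω
      simp only [Set.mem_iInter, Finset.mem_range, Set.mem_preimage, hSA, Set.mem_setOf_eq]
      constructor
      · intro h j hj
        rw [Finset.sum_congr rfl (fun i hi => keyA ω i ?_)]
        · exact h j hj
        · rw [Finset.mem_Ico] at hi
          exact lt_of_lt_of_le hi.2 (tauF'_mono a g hj)
      · intro h j hj
        have := h j hj
        rwa [Finset.sum_congr rfl (fun i hi => keyA ω i ?_)] at this
        rw [Finset.mem_Ico] at hi
        exact lt_of_lt_of_le hi.2 (tauF'_mono a g hj)
    have keyB : ∀ ω i, i ∈ B → extB (VB ω) i = X i ω := by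
      intro ω i hi
      rw [hextB]
      simp only [hVB]
      rw [dif_pos hi]
    have hBev : {ω | ∑ i ∈ Finset.Ico (tauF' a g m) (tauF' a g (m+1)), X i ω = 0}
        = VB ⁻¹' SB := by
      ext ω
      simp only [Set.mem_setOf_eq, Set.mem_preimage, hSB, Set.mem_setOf_eq]
      rw [Finset.sum_congr rfl (fun i hi => (keyB ω i hi).symm)]
    have hmul := (indepFun_iff_measure_inter_preimage_eq_mul.mp hindAB) SA SB
      (Set.to_countable _).measurableSet (Set.to_countable _).measurableSet
    rw [hQ, hBev, hmul, ← hQ, ← hBev, ih, mul_comm]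
    congr 1
    have hgm : tauF' a g (m+1) - tauF' a g m = g m := by
      show tauF' a g m + g m - tauF' a g m = g m
      omega
    rw [ico_law hmeas hindep hident, hgm]

lemma EpSet_meas (hmeas : ∀ i, Measurable (X i)) (m : ℕ) (p : ℕ × (Fin m → ℕ)) :
    MeasurableSet (EpSet X m p) := by
  refine MeasurableSet.biInter (Finset.range m).countable_toSet (fun j _ => ?_)
  exact (meas_fsum hmeas _) (measurableSet_singleton 0)

lemma ZF_meas (hmeas : ∀ i, Measurable (X i)) (m n : ℕ) : Measurable (ZF X m n) := by
  refine Finset.measurable_sum _ (fun p _ => ?_)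
  exact measurable_const.indicator (EpSet_meas hmeas m p)

lemma lint_ZF (hmeas : ∀ i, Measurable (X i))
    (hindep : iIndepFun X P)
    (hident : ∀ i, Measure.map (X i) P = Measure.map (X 0) P) (m n : ℕ) :
    ∫⁻ ω, ZF X m n ω ∂P ≤ (n : ℝ≥0∞) *
      (∑' k : ℕ, P {ω | ∑ i ∈ Finset.range (k+1), X i ω = 0})^m := by
  set G := ∑' k : ℕ, P {ω | ∑ i ∈ Finset.range (k+1), X i ω = 0} with hG
  set u : ℕ → ℝ≥0∞ := fun g => P {ω | ∑ i ∈ Finset.range g, X i ω = 0} with hu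
  have h1 : ∫⁻ ω, ZF X m n ω ∂P = ∑ p ∈ idxF m n, P (EpSet X m p) := by
    show ∫⁻ ω, ∑ p ∈ idxF m n, Set.indicator (EpSet X m p) (fun _ => 1) ω ∂P = _
    rw [lintegral_finset_sum _ (fun p _ => measurable_const.indicator (EpSet_meas hmeas m p))]
    refine Finset.sum_congr rfl (fun p _ => ?_)
    rw [lintegral_indicator_const (EpSet_meas hmeas m p), one_mul]
  have h2 : ∀ p : ℕ × (Fin m → ℕ), P (EpSet X m p) = ∏ j : Fin m, u (p.2 j) := by
    intro p
    rw [EpSet, prod_law hmeas hindep hident, ← Fin.prod_univ_eq_prod_range]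
    exact Finset.prod_congr rfl (fun i _ => by simp [extF, i.isLt, hu])
  have hfac : ∑ c ∈ Finset.Icc 1 n, u c ≤ G := by
    have he : ∑ c ∈ Finset.Icc 1 n, u c = ∑ k ∈ Finset.range n, u (k+1) := by
      rw [← Finset.Ico_add_one_right_eq_Icc, Finset.sum_Ico_eq_sum_range]
      simp [Nat.add_comm]
    rw [he, hG]
    exact ENNReal.sum_le_tsum _
  have h3 : ∑ p ∈ idxF m n, P (EpSet X m p)
      = (n : ℝ≥0∞) * ∏ _j : Fin m, (∑ c ∈ Finset.Icc 1 n, u c) := by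
    rw [idxF, Finset.sum_product]
    have hin : ∀ a : ℕ, ∑ g ∈ Fintype.piFinset (fun _ : Fin m => Finset.Icc 1 n),
        P (EpSet X m (a, g)) = ∏ _j : Fin m, (∑ c ∈ Finset.Icc 1 n, u c) := by
      intro a
      rw [Finset.prod_univ_sum]
      exact Finset.sum_congr rfl (fun g _ => h2 (a, g))
    rw [Finset.sum_congr rfl (fun a _ => hin a), Finset.sum_const, Nat.card_Icc, nsmul_eq_mul]
    norm_num
  rw [h1, h3]
  refine mul_le_mul_right ?_ _
  calc ∏ _j : Fin m, (∑ c ∈ Finset.Icc 1 n, u c) ≤ ∏ _j : Fin m, G :=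
        Finset.prod_le_prod' (fun _ _ => hfac)
    _ = G ^ m := by rw [Finset.prod_const, Finset.card_univ, Fintype.card_fin]

lemma count_ZF {S : ℕ → Ω → (Fin d → ℤ)}
    (hS : ∀ n ω, S n ω = ∑ i ∈ Finset.range n, X i ω)
    (m n : ℕ) (ω : Ω) (x : Fin d → ℤ) :
    ((((Finset.Icc 1 n).filter (fun i => S i ω = x)).card.choose (m+1) : ℕ) : ℝ≥0∞)
      ≤ ZF X m n ω := by
  classical
  set T := (Finset.Icc 1 n).filter (fun i => S i ω = x) with hT
  have hZcard : ZF X m n ω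
      = (((idxF m n).filter (fun p => ω ∈ EpSet X m p)).card : ℝ≥0∞) := by
    rw [ZF, ← Finset.sum_boole]
    exact Finset.sum_congr rfl (fun p _ => by rw [Set.indicator_apply])
  rw [hZcard, Nat.cast_le, ← Finset.card_powersetCard (m+1) T]
  set Ψ : Finset ℕ → ℕ × (Fin m → ℕ) := fun s =>
    if h : s.card = m + 1 then
      (((s.orderIsoOfFin h) ⟨0, Nat.succ_pos m⟩ : ℕ),
        fun j => ((s.orderIsoOfFin h) j.succ : ℕ) - ((s.orderIsoOfFin h) j.castSucc : ℕ))
    else (0, fun _ => 0) with hΨ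
  -- facts about Ψ on sets of card m+1
  have main : ∀ (s : Finset ℕ) (h : s.card = m + 1),
      (∀ jv (hj : jv < m + 1), tauF' (Ψ s).1 (extF m (Ψ s).2) jv
        = ((s.orderIsoOfFin h) ⟨jv, hj⟩ : ℕ)) := by
    intro s h jv
    induction jv with
    | zero =>
      intro hj
      show tauF' (Ψ s).1 _ 0 = _
      rw [hΨ]
      simp only [dif_pos h]
      rfl
    | succ j ihj =>
      intro hj
      have hjm : j < m := by omega
      have hj' : j < m + 1 := by omega
      show tauF' (Ψ s).1 (extF m (Ψ s).2) j + extF m (Ψ s).2 j = _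
      rw [ihj hj']
      have hg : (Ψ s).2 = fun j : Fin m =>
          ((s.orderIsoOfFin h) j.succ : ℕ) - ((s.orderIsoOfFin h) j.castSucc : ℕ) := by
        rw [hΨ]; simp only [dif_pos h]
      have hext : extF m (Ψ s).2 j
          = ((s.orderIsoOfFin h) ⟨j+1, hj⟩ : ℕ) - ((s.orderIsoOfFin h) ⟨j, hj'⟩ : ℕ) := by
        rw [extF, dif_pos hjm, hg]
        rfl
      rw [hext]
      have hlt : ((s.orderIsoOfFin h) ⟨j, hj'⟩ : ℕ) ≤ ((s.orderIsoOfFin h) ⟨j+1, hj⟩ : ℕ) := by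
        have : (⟨j, hj'⟩ : Fin (m+1)) ≤ ⟨j+1, hj⟩ := by
          simp [Fin.mk_le_mk]
        exact Subtype.coe_le_coe.mpr ((s.orderIsoOfFin h).monotone this)
      omega
  have hstrict : ∀ (s : Finset ℕ) (h : s.card = m + 1) (i j : Fin (m+1)), i < j →
      ((s.orderIsoOfFin h) i : ℕ) < ((s.orderIsoOfFin h) j : ℕ) := by
    intro s h i j hij
    exact Subtype.coe_lt_coe.mpr ((s.orderIsoOfFin h).strictMono hij)
  have hmemT : ∀ (s : Finset ℕ), s ∈ T.powersetCard (m+1) →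
      ∀ (h : s.card = m+1) (j : Fin (m+1)), ((s.orderIsoOfFin h) j : ℕ) ∈ T := by
    intro s hs h j
    have hsub : s ⊆ T := (Finset.mem_powersetCard.mp hs).1
    exact hsub ((s.orderIsoOfFin h) j).2
  refine Finset.card_le_card_of_injOn Ψ ?_ ?_
  · -- maps into the filter
    intro s hs
    have h : s.card = m + 1 := (Finset.mem_powersetCard.mp hs).2
    have hTmem := hmemT s hs h
    have hIcc : ∀ j : Fin (m+1), ((s.orderIsoOfFin h) j : ℕ) ∈ Finset.Icc 1 n := by
      intro j
      exact Finset.mem_of_mem_filter _ (hTmem j)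
    rw [Finset.mem_coe, Finset.mem_filter]
    constructor
    · -- membership in idxF
      rw [idxF, Finset.mem_product]
      constructor
      · have : (Ψ s).1 = ((s.orderIsoOfFin h) ⟨0, Nat.succ_pos m⟩ : ℕ) := by
          rw [hΨ]; simp only [dif_pos h]
        rw [this]
        exact hIcc _
      · rw [Fintype.mem_piFinset]
        intro j
        have hg : (Ψ s).2 j
            = ((s.orderIsoOfFin h) j.succ : ℕ) - ((s.orderIsoOfFin h) j.castSucc : ℕ) := by
          rw [hΨ]; simp only [dif_pos h]
        rw [hg, Finset.mem_Icc]
        constructor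
        · have := hstrict s h j.castSucc j.succ (Fin.castSucc_lt_succ (i := j))
          omega
        · have h2 := (Finset.mem_Icc.mp (hIcc j.succ)).2
          omega
    · -- the event holds
      show ω ∈ EpSet X m (Ψ s)
      rw [EpSet, Set.mem_iInter₂]
      intro j hj
      rw [Finset.mem_range] at hj
      have hj1 : j < m + 1 := by omega
      have hj2 : j + 1 < m + 1 := by omega
      rw [Set.mem_setOf_eq]
      have ht1 := main s h j hj1
      have ht2 := main s h (j+1) hj2
      have hx1 : S (tauF' (Ψ s).1 (extF m (Ψ s).2) j) ω = x := by
        rw [ht1]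
        exact (Finset.mem_filter.mp (hmemT s hs h ⟨j, hj1⟩)).2
      have hx2 : S (tauF' (Ψ s).1 (extF m (Ψ s).2) (j+1)) ω = x := by
        rw [ht2]
        exact (Finset.mem_filter.mp (hmemT s hs h ⟨j+1, hj2⟩)).2
      have hle : tauF' (Ψ s).1 (extF m (Ψ s).2) j ≤ tauF' (Ψ s).1 (extF m (Ψ s).2) (j+1) :=
        tauF'_mono _ _ (Nat.le_succ j)
      have hsplit : S (tauF' (Ψ s).1 (extF m (Ψ s).2) j) ω
          + ∑ i ∈ Finset.Ico (tauF' (Ψ s).1 (extF m (Ψ s).2) j)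
              (tauF' (Ψ s).1 (extF m (Ψ s).2) (j+1)), X i ω
          = S (tauF' (Ψ s).1 (extF m (Ψ s).2) (j+1)) ω := by
        rw [hS, hS, Finset.range_eq_Ico, Finset.range_eq_Ico]
        exact Finset.sum_Ico_consecutive _ (Nat.zero_le _) hle
      rw [hx1, hx2] at hsplit
      exact add_eq_left.mp hsplit
  · -- injectivity
    intro s hs s' hs' heq
    have h : s.card = m + 1 := (Finset.mem_powersetCard.mp hs).2
    have h' : s'.card = m + 1 := (Finset.mem_powersetCard.mp hs').2
    have himg : ∀ (t : Finset ℕ) (ht : t.card = m+1), t ∈ T.powersetCard (m+1) →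
        t = Finset.image (fun j : Fin (m+1) => tauF' (Ψ t).1 (extF m (Ψ t).2) j.val)
          Finset.univ := by
      intro t ht _
      ext y
      simp only [Finset.mem_image, Finset.mem_univ, true_and]
      constructor
      · intro hy
        refine ⟨(t.orderIsoOfFin ht).symm ⟨y, hy⟩, ?_⟩
        rw [main t ht _ (Fin.is_lt _)]
        simp
      · rintro ⟨j, rfl⟩
        rw [main t ht _ (Fin.is_lt _)]
        exact ((t.orderIsoOfFin ht) _).2
    rw [himg s h hs, himg s' h' hs', heq]
lemma eventually_bound (hmeas : ∀ i, Measurable (X i))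
    (hindep : iIndepFun X P)
    (hident : ∀ i, Measure.map (X i) P = Measure.map (X 0) P)
    {S : ℕ → Ω → (Fin d → ℤ)}
    (hS : ∀ n ω, S n ω = ∑ i ∈ Finset.range n, X i ω)
    (hG : (∑' k : ℕ, P {ω | ∑ i ∈ Finset.range (k+1), X i ω = 0}) ≠ ⊤)
    {ε δ : ℝ} (hε : 0 < ε) (hδ : 0 < δ) :
    ∀ᵐ ω ∂P, ∀ᶠ n : ℕ in atTop, ∀ x : Fin d → ℤ,
      (((Finset.Icc 1 n).filter (fun i => S i ω = x)).card : ℝ) ≤ δ * (n:ℝ) ^ ε := by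
  classical
  set m : ℕ := ⌈2/ε⌉₊ with hm
  set r : ℕ := m + 1 with hr
  have hmε : (2:ℝ) ≤ m * ε := by
    have h1 : 2/ε ≤ (m:ℝ) := Nat.le_ceil _
    calc (2:ℝ) = (2/ε) * ε := by field_simp
      _ ≤ m * ε := by gcongr
  have hεr : 2 + ε ≤ ε * r := by
    push_cast [hr]
    nlinarith
  set G := ∑' k : ℕ, P {ω | ∑ i ∈ Finset.range (k+1), X i ω = 0} with hGdef
  set K : ℝ≥0∞ := G ^ m with hK
  have hKne : K ≠ ⊤ := ENNReal.pow_ne_top hG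
  set Kr : ℝ := K.toReal with hKr
  have hKr0 : 0 ≤ Kr := ENNReal.toReal_nonneg
  set kk : ℕ → ℕ := fun n => ⌈δ * (n:ℝ) ^ ε⌉₊ with hkk
  set c : ℕ → ℕ := fun n => (kk n).choose r with hc
  set A : ℕ → Set Ω := fun n => {ω | (c n : ℝ≥0∞) ≤ ZF X m n ω} with hA
  have hmarkov : ∀ n : ℕ, (c n : ℝ≥0∞) * P (A n) ≤ (n : ℝ≥0∞) * K :=
    fun n => le_trans (mul_meas_ge_le_lintegral (ZF_meas hmeas m n) (c n))
      (lint_ZF hmeas hindep hident m n)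
  -- choose N₀
  obtain ⟨N₀, hN₀⟩ : ∃ N₀ : ℕ, ∀ n ≥ N₀, (2*((m:ℝ)+1))/δ ≤ (n:ℝ)^ε := by
    have ht : Tendsto (fun n : ℕ => (n:ℝ)^ε) atTop atTop :=
      (tendsto_rpow_atTop hε).comp tendsto_natCast_atTop_atTop
    exact eventually_atTop.mp (ht.eventually_ge_atTop _)
  set N₁ : ℕ := max N₀ 1 with hN₁
  set c2 : ℝ := δ^r / 2^r / (r.factorial : ℝ) * (2:ℝ)^(-(1+ε)) with hc2
  have hc2pos : 0 < c2 := by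
    have : (0:ℝ) < (2:ℝ)^(-(1+ε)) := Real.rpow_pos_of_pos two_pos _
    positivity
  set C : ℝ := max ((Kr+1)/c2) (((N₁:ℝ)+1)^(1+ε)) with hC
  have hCpos : 0 < C :=
    lt_of_lt_of_le (Real.rpow_pos_of_pos (by positivity) _) (le_max_right _ _)
  set b : ℕ → ℝ := fun n => C * ((n:ℝ)+1)^(-(1+ε)) with hb
  have hbpos : ∀ n, 0 ≤ b n := by
    intro n
    have : (0:ℝ) ≤ ((n:ℝ)+1)^(-(1+ε)) := Real.rpow_nonneg (by positivity) _
    positivity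
  -- the pointwise bound P (A n) ≤ ofReal (b n)
  have hPA : ∀ n : ℕ, P (A n) ≤ ENNReal.ofReal (b n) := by
    intro n
    by_cases hn : N₁ ≤ n
    · -- large n
      have hn1 : 1 ≤ n := le_trans (le_max_right _ _) hn
      have hn1R : (1:ℝ) ≤ (n:ℝ) := by exact_mod_cast hn1
      have hnpos : (0:ℝ) < n := by linarith
      set y : ℝ := δ * (n:ℝ)^ε with hy
      have hy2m : 2*((m:ℝ)+1) ≤ y := by
        have := hN₀ n (le_trans (le_max_left _ _) hn)
        rw [hy]
        rw [div_le_iff₀ hδ] at this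
        linarith [this]
      have hykk : y ≤ (kk n : ℝ) := Nat.le_ceil _
      have hmkk : m ≤ kk n := by
        have : (m:ℝ) ≤ (kk n : ℝ) := by linarith
        exact_mod_cast this
      have hsub : y/2 ≤ ((kk n - m : ℕ) : ℝ) := by
        rw [Nat.cast_sub hmkk]
        linarith
      have hy0 : 0 ≤ y/2 := by nlinarith
      -- choose lower bound
      have hnat : (kk n - m)^r ≤ r.factorial * c n := by
        have h1 : (kk n + 1 - r)^r ≤ (kk n).descFactorial r := Nat.pow_sub_le_descFactorial _ _
        have h2 : (kk n).descFactorial r = r.factorial * (kk n).choose r :=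
          Nat.descFactorial_eq_factorial_mul_choose _ _
        have h3 : kk n + 1 - r = kk n - m := by omega
        rw [h3, h2] at h1
        exact h1
      have hcn : (y/2)^r / (r.factorial : ℝ) ≤ (c n : ℝ) := by
        rw [div_le_iff₀ (by positivity)]
        calc (y/2)^r ≤ (((kk n - m : ℕ)):ℝ)^r := by gcongr
          _ ≤ ((r.factorial * c n : ℕ) : ℝ) := by exact_mod_cast Nat.cast_le.mpr hnat
          _ = (c n : ℝ) * (r.factorial : ℝ) := by push_cast; ring
      -- rpow computations
      have hpow1 : ((n:ℝ)^ε)^r = (n:ℝ)^(ε * r) := by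
        rw [← Real.rpow_natCast ((n:ℝ)^ε) r, ← Real.rpow_mul (by positivity)]
      have hpow2 : (n:ℝ)^(2+ε) ≤ ((n:ℝ)^ε)^r := by
        rw [hpow1]
        exact Real.rpow_le_rpow_of_exponent_le hn1R hεr
      have hy2r : δ^r / 2^r * (n:ℝ)^(2+ε) ≤ (y/2)^r := by
        have : (y/2)^r = δ^r / 2^r * ((n:ℝ)^ε)^r := by
          rw [hy]; rw [div_pow, mul_pow]; ring
        rw [this]
        gcongr
      have he3 : (2:ℝ)^(-(1+ε)) * (n:ℝ)^(-(1+ε)) ≤ ((n:ℝ)+1)^(-(1+ε)) := by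
        rw [← Real.mul_rpow (by norm_num) (by positivity)]
        apply Real.rpow_le_rpow_of_nonpos (by positivity) (by linarith) (by linarith)
      have hrw : (n:ℝ)^(2+ε) * (n:ℝ)^(-(1+ε)) = (n:ℝ) := by
        have hexp : (2+ε) + (-(1+ε)) = 1 := by ring
        rw [← Real.rpow_add hnpos, hexp, Real.rpow_one]
      have hCc2 : Kr ≤ C * c2 := by
        have h1 : (Kr+1)/c2 ≤ C := le_max_left _ _
        rw [div_le_iff₀ hc2pos] at h1
        linarith
      -- the real inequality
      have hreal : (n:ℝ) * Kr ≤ (c n : ℝ) * b n := by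
        have expand : (δ^r / 2^r * (n:ℝ)^(2+ε) / (r.factorial : ℝ))
              * (C * ((2:ℝ)^(-(1+ε)) * (n:ℝ)^(-(1+ε))))
            = ((n:ℝ)^(2+ε) * (n:ℝ)^(-(1+ε))) * (C * c2) := by
          rw [hc2]; ring
        calc (n:ℝ) * Kr ≤ (n:ℝ) * (C * c2) := by
              apply mul_le_mul_of_nonneg_left hCc2 (by positivity)
          _ = (δ^r / 2^r * (n:ℝ)^(2+ε) / (r.factorial : ℝ))
              * (C * ((2:ℝ)^(-(1+ε)) * (n:ℝ)^(-(1+ε)))) := by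
              rw [expand, hrw]
          _ ≤ ((y/2)^r / (r.factorial : ℝ)) * (C * (((n:ℝ)+1)^(-(1+ε)))) := by
              apply mul_le_mul
              · gcongr
              · exact mul_le_mul_of_nonneg_left he3 (le_of_lt hCpos)
              · positivity
              · positivity
          _ ≤ (c n : ℝ) * b n := by
              rw [hb]
              apply mul_le_mul_of_nonneg_right hcn (by positivity)
      -- transfer to ENNReal
      have hcne0 : (c n : ℝ≥0∞) ≠ 0 := by
        have hrkk : r ≤ kk n := by
          have hrR : (r:ℝ) ≤ (kk n : ℝ) := by push_cast [hr]; linarith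
          exact_mod_cast hrR
        have hpos : 0 < c n := Nat.choose_pos hrkk
        exact_mod_cast Nat.cast_ne_zero.mpr (Nat.pos_iff_ne_zero.mp hpos)
      have hcnetop : (c n : ℝ≥0∞) ≠ ⊤ := ENNReal.natCast_ne_top _
      have key : (n : ℝ≥0∞) * K ≤ (c n : ℝ≥0∞) * ENNReal.ofReal (b n) := by
        have h1 : (n : ℝ≥0∞) * K = ENNReal.ofReal ((n:ℝ) * Kr) := by
          rw [ENNReal.ofReal_mul (by positivity), ENNReal.ofReal_natCast,
            ENNReal.ofReal_toReal hKne]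
        have h2 : ENNReal.ofReal ((c n : ℝ) * b n) = (c n : ℝ≥0∞) * ENNReal.ofReal (b n) := by
          rw [ENNReal.ofReal_mul (by positivity), ENNReal.ofReal_natCast]
        rw [h1, ← h2]
        exact ENNReal.ofReal_le_ofReal hreal
      have := le_trans (hmarkov n) key
      exact (ENNReal.mul_le_mul_iff_right hcne0 hcnetop).mp this
    · -- small n
      push_neg at hn
      have h1 : P (A n) ≤ 1 := prob_le_one
      refine le_trans h1 ?_
      rw [ENNReal.one_le_ofReal]
      have h2 : ((N₁:ℝ)+1)^(1+ε) ≤ C := le_max_right _ _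
      have hnN : (n:ℝ) + 1 ≤ (N₁:ℝ) + 1 := by
        have : (n:ℝ) ≤ (N₁:ℝ) := by exact_mod_cast le_of_lt hn
        linarith
      have h3 : ((n:ℝ)+1)^(1+ε) ≤ ((N₁:ℝ)+1)^(1+ε) :=
        Real.rpow_le_rpow (by positivity) hnN (by linarith)
      have h4 : (1:ℝ) = ((n:ℝ)+1)^(1+ε) * ((n:ℝ)+1)^(-(1+ε)) := by
        have hexp0 : (1+ε) + (-(1+ε)) = 0 := by ring
        rw [← Real.rpow_add (by positivity), hexp0, Real.rpow_zero]
      show (1:ℝ) ≤ b n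
      calc (1:ℝ) = ((n:ℝ)+1)^(1+ε) * ((n:ℝ)+1)^(-(1+ε)) := h4
        _ ≤ C * ((n:ℝ)+1)^(-(1+ε)) :=
            mul_le_mul (le_trans h3 h2) le_rfl (Real.rpow_nonneg (by positivity) _)
              (le_of_lt hCpos)
        _ = b n := by rw [hb]
  -- summability
  have hbsum : Summable b := by
    apply Summable.mul_left
    have h0 : Summable (fun n : ℕ => (n:ℝ)^(-(1+ε))) :=
      Real.summable_nat_rpow.mpr (by linarith)
    have h1 := h0.comp_injective (add_left_injective 1)
    refine h1.congr fun n => ?_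
    show (((n+1 : ℕ)):ℝ)^(-(1+ε)) = ((n:ℝ)+1)^(-(1+ε))
    norm_num
  have htsum : ∑' n, P (A n) ≠ ⊤ := by
    refine ne_top_of_le_ne_top ?_ (ENNReal.tsum_le_tsum hPA)
    rw [← ENNReal.ofReal_tsum_of_nonneg hbpos hbsum]
    exact ENNReal.ofReal_ne_top
  have hBC := measure_limsup_atTop_eq_zero htsum
  have hae : ∀ᵐ ω ∂P, ω ∉ Filter.limsup A atTop := measure_eq_zero_iff_ae_notMem.mp hBC
  filter_upwards [hae] with ω hω
  have hev : ∀ᶠ n in atTop, ω ∉ A n := by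
    rw [Filter.limsup_eq_iInf_iSup_of_nat] at hω
    simpa using hω
  filter_upwards [hev] with n hn x
  by_contra hcon
  push_neg at hcon
  have h1 : kk n ≤ ((Finset.Icc 1 n).filter (fun i => S i ω = x)).card :=
    Nat.ceil_le.mpr (le_of_lt hcon)
  have h2 : c n ≤ ((Finset.Icc 1 n).filter (fun i => S i ω = x)).card.choose r :=
    Nat.choose_le_choose r h1
  have h3 : (c n : ℝ≥0∞) ≤ ZF X m n ω := by
    refine le_trans ?_ (count_ZF hS m n ω x)
    exact_mod_cast Nat.cast_le.mpr h2
  exact hn h3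
end AuxAll

theorem stmt_6
    {Ω : Type*} [MeasurableSpace Ω] (P : Measure Ω) [IsProbabilityMeasure P]
    (d : ℕ) (hd : 1 ≤ d)
    (X : ℕ → Ω → (Fin d → ℤ))
    (hmeas : ∀ i, Measurable (X i))
    (hindep : iIndepFun X P)
    (hident : ∀ i, Measure.map (X i) P = Measure.map (X 0) P)
    (S : ℕ → Ω → (Fin d → ℤ))
    (hS : ∀ n ω, S n ω = ∑ i ∈ Finset.range n, X i ω)
    (htrans : ∑' n : ℕ, P {ω | S (n + 1) ω = 0} < ⊤)
    (N : ℕ → (Fin d → ℤ) → Ω → ℝ)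
    (hN : ∀ n x ω, N n x ω = ∑ i ∈ Finset.Icc 1 n, if S i ω = x then (1 : ℝ) else 0)
 :
    ∀ ε : ℝ, 0 < ε → ∀ᵐ ω ∂P, Tendsto
      (fun n : ℕ => (⨆ x : Fin d → ℤ, N n x ω) / (n : ℝ) ^ ε) atTop (nhds 0) := by
  classical
  intro ε hε
  have hG : (∑' k : ℕ, P {ω | ∑ i ∈ Finset.range (k+1), X i ω = 0}) ≠ ⊤ := by
    have hfe : (fun k : ℕ => P {ω | ∑ i ∈ Finset.range (k+1), X i ω = 0})
        = fun k : ℕ => P {ω | S (k+1) ω = 0} := by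
      funext k
      congr 1
      ext ω
      rw [Set.mem_setOf_eq, Set.mem_setOf_eq, hS]
    rw [hfe]
    exact ne_of_lt htrans
  have hmain : ∀ j : ℕ, ∀ᵐ ω ∂P, ∀ᶠ n : ℕ in atTop, ∀ x : Fin d → ℤ,
      (((Finset.Icc 1 n).filter (fun i => S i ω = x)).card : ℝ)
        ≤ (1/((j:ℝ)+1)) * (n:ℝ)^ε :=
    fun j => eventually_bound hmeas hindep hident hS hG hε (by positivity)
  filter_upwards [ae_all_iff.mpr hmain] with ω hω
  have hNcard : ∀ n (x : Fin d → ℤ), N n x ω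
      = (((Finset.Icc 1 n).filter (fun i => S i ω = x)).card : ℝ) := by
    intro n x
    rw [hN]
    rw [Finset.sum_boole]
  have hNnonneg : ∀ n (x : Fin d → ℤ), 0 ≤ N n x ω := by
    intro n x
    rw [hNcard]
    positivity
  have hNle : ∀ n (x : Fin d → ℤ), N n x ω ≤ n := by
    intro n x
    rw [hNcard]
    have h1 : ((Finset.Icc 1 n).filter (fun i => S i ω = x)).card ≤ (Finset.Icc 1 n).card :=
      Finset.card_filter_le _ _
    have h2 : (Finset.Icc 1 n).card = n := by rw [Nat.card_Icc]; omega
    have := le_trans h1 (le_of_eq h2)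
    exact_mod_cast this
  have hf_nonneg : ∀ n : ℕ, 0 ≤ (⨆ x : Fin d → ℤ, N n x ω) / (n:ℝ)^ε := fun n =>
    div_nonneg (Real.iSup_nonneg (hNnonneg n)) (Real.rpow_nonneg (Nat.cast_nonneg n) ε)
  rw [tendsto_order]
  constructor
  · intro a ha
    exact Filter.Eventually.of_forall fun n => lt_of_lt_of_le ha (hf_nonneg n)
  · intro a ha
    obtain ⟨j, hj⟩ := exists_nat_one_div_lt ha
    filter_upwards [hω j, eventually_ge_atTop 1] with n hn hn1
    have hn0 : (0:ℝ) < (n:ℝ) := by exact_mod_cast hn1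
    have hnpos : (0:ℝ) < (n:ℝ)^ε := Real.rpow_pos_of_pos hn0 ε
    have hsup_le : (⨆ x : Fin d → ℤ, N n x ω) ≤ (1/((j:ℝ)+1)) * (n:ℝ)^ε :=
      ciSup_le (fun x => by rw [hNcard]; exact hn x)
    have hdiv : (⨆ x : Fin d → ℤ, N n x ω) / (n:ℝ)^ε ≤ 1/((j:ℝ)+1) :=
      (div_le_iff₀ hnpos).mpr (by rw [mul_comm] at hsup_le ⊢; exact hsup_le)
    exact lt_of_le_of_lt hdiv hj
end

section
/- For every pair of reals 0 ≤ a < b, almost surely (1/n)·∑_{k=0}^{⌊an⌋} ∑_{l=⌊an⌋+1}^{⌊bn⌋} 1_{{S_k = S_l}} → 0 as n → ∞, where (S_n) is a transient random walk on ℤ^d. -/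
set_option linter.unusedSectionVars false
set_option maxHeartbeats 2000000

open MeasureTheory ProbabilityTheory Filter Real

namespace Stmt11Aux

variable {α : Type*} [MeasurableSpace α]

/-- partial sums of `g ∘ T^[k] - lam` -/
noncomputable def Fsum (T : α → α) (g : α → ℝ) (lam : ℝ) (n : ℕ) (x : α) : ℝ :=
  ∑ k ∈ Finset.range n, (g (T^[k] x) - lam)

/-- running max of `Fsum` over `0..N` -/
noncomputable def Msup (T : α → α) (g : α → ℝ) (lam : ℝ) : ℕ → α → ℝ
  | 0, _ => 0
  | (N+1), x => max (Msup T g lam N x) (Fsum T g lam (N+1) x)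

variable {T : α → α} {g : α → ℝ} {lam : ℝ}

lemma Fsum_succ (n : ℕ) (x : α) :
    Fsum T g lam (n+1) x = (g x - lam) + Fsum T g lam n (T x) := by
  simp only [Fsum, Finset.sum_range_succ' (fun k => g (T^[k] x) - lam) n]
  simp only [Function.iterate_succ_apply, Function.iterate_zero_apply]
  ring

lemma Msup_nonneg (N : ℕ) (x : α) : 0 ≤ Msup T g lam N x := by
  induction N with
  | zero => simp [Msup]
  | succ N ih => exact le_trans ih (le_max_left _ _)

lemma Msup_mono (N : ℕ) (x : α) : Msup T g lam N x ≤ Msup T g lam (N+1) x :=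
  le_max_left _ _

lemma Fsum_le_Msup {n N : ℕ} (hn : n ≤ N) (x : α) : Fsum T g lam n x ≤ Msup T g lam N x := by
  induction N with
  | zero =>
    interval_cases n
    simp [Fsum, Msup]
  | succ N ih =>
    rcases Nat.lt_or_ge n (N+1) with h | h
    · exact le_trans (ih (Nat.lt_succ_iff.mp h)) (le_max_left _ _)
    · have : n = N + 1 := le_antisymm hn h
      subst this
      exact le_max_right _ _
lemma Msup_attained {N : ℕ} {x : α} (h : 0 < Msup T g lam N x) :
    ∃ n, 1 ≤ n ∧ n ≤ N ∧ Msup T g lam N x ≤ Fsum T g lam n x := by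
  induction N with
  | zero => simp [Msup] at h
  | succ N ih =>
    rcases le_total (Fsum T g lam (N+1) x) (Msup T g lam N x) with h1 | h1
    · have hM : Msup T g lam (N+1) x = Msup T g lam N x := max_eq_left h1
      rw [hM] at h ⊢
      obtain ⟨n, h1n, hnN, hle⟩ := ih h
      exact ⟨n, h1n, hnN.trans (Nat.le_succ N), hle⟩
    · refine ⟨N+1, Nat.succ_le_succ (Nat.zero_le N), le_refl _, ?_⟩
      exact max_le h1 (le_refl _)

lemma Msup_le_bound (C : ℝ) (hgC : ∀ x, g x - lam ≤ C) (N : ℕ) (x : α) :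
    Msup T g lam N x ≤ N * |C| := by
  have hF : ∀ n : ℕ, Fsum T g lam n x ≤ n * |C| := by
    intro n
    calc Fsum T g lam n x ≤ ∑ k ∈ Finset.range n, |C| :=
          Finset.sum_le_sum fun k _ => (hgC _).trans (le_abs_self C)
      _ = n * |C| := by simp [mul_comm]
  induction N with
  | zero => simp [Msup]
  | succ N ih =>
    refine max_le (ih.trans ?_) (hF (N+1))
    have h1 : ((N+1:ℕ):ℝ) = (N:ℝ)+1 := by push_cast; ring
    rw [h1]
    nlinarith [abs_nonneg C]

lemma measurable_Fsum (hT : Measurable T) (hg : Measurable g) (n : ℕ) :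
    Measurable (Fsum T g lam n) := by
  apply Finset.measurable_sum
  exact fun k _ => (hg.comp (hT.iterate k)).sub measurable_const

lemma measurable_Msup (hT : Measurable T) (hg : Measurable g) (N : ℕ) :
    Measurable (Msup T g lam N) := by
  induction N with
  | zero => simpa [Msup] using measurable_const
  | succ N ih => exact Measurable.max ih (measurable_Fsum hT hg (N+1))


/-- Garsia's maximal ergodic inequality. -/
lemma maximal_ergodic (ν : Measure α) [IsProbabilityMeasure ν]
    (T : α → α) (hT : Measurable T) (hTP : Measure.map T ν = ν)
    (g : α → ℝ) (hg : Measurable g) (hg0 : ∀ x, 0 ≤ g x) (C : ℝ) (hgC : ∀ x, g x ≤ C)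
    {lam : ℝ} (hlam : 0 < lam) :
    ν {x | ∃ n : ℕ, 1 ≤ n ∧ (n : ℝ) * lam < ∑ k ∈ Finset.range n, g (T^[k] x)} ≤
      ENNReal.ofReal ((∫ x, g x ∂ν) / lam) := by
  classical
  have hgC' : ∀ x, g x - lam ≤ C := fun x => by linarith [hgC x]
  -- integrability facts
  have hint_g : Integrable g ν := by
    refine (integrable_const (max C 0)).mono' hg.aestronglyMeasurable ?_
    exact ae_of_all _ fun x => by
      rw [Real.norm_eq_abs, abs_of_nonneg (hg0 x)]
      exact (hgC x).trans (le_max_left _ _)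
  have hintM : ∀ N, Integrable (Msup T g lam N) ν := by
    intro N
    refine (integrable_const ((N:ℝ) * |C|)).mono'
      (measurable_Msup hT hg N).aestronglyMeasurable ?_
    refine ae_of_all _ fun x => ?_
    rw [Real.norm_eq_abs, abs_of_nonneg (Msup_nonneg N x)]
    exact Msup_le_bound C hgC' N x
  have hintMT : ∀ N, Integrable (fun x => Msup T g lam N (T x)) ν := by
    intro N
    refine (integrable_const ((N:ℝ) * |C|)).mono'
      ((measurable_Msup hT hg N).comp hT).aestronglyMeasurable ?_
    refine ae_of_all _ fun x => ?_
    rw [Real.norm_eq_abs, abs_of_nonneg (Msup_nonneg N (T x))]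
    exact Msup_le_bound C hgC' N (T x)
  have hMT_int_eq : ∀ N, ∫ x, Msup T g lam N (T x) ∂ν = ∫ x, Msup T g lam N x ∂ν := by
    intro N
    conv_rhs => rw [← hTP]
    rw [integral_map hT.aemeasurable (measurable_Msup hT hg N).aestronglyMeasurable]
  -- the sets
  set A : ℕ → Set α := fun N => {x | 0 < Msup T g lam N x} with hA
  have hAmeas : ∀ N, MeasurableSet (A N) :=
    fun N => measurableSet_lt measurable_const (measurable_Msup hT hg N)
  have hInt0 : 0 ≤ ∫ x, g x ∂ν := integral_nonneg hg0
  have hdivnn : 0 ≤ (∫ x, g x ∂ν) / lam := div_nonneg hInt0 hlam.le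
  -- key per-N bound
  have key : ∀ N : ℕ, ν (A N) ≤ ENNReal.ofReal ((∫ x, g x ∂ν) / lam) := by
    intro N
    match N with
    | 0 =>
      have : A 0 = ∅ := by
        ext x; simp [hA, Msup]
      rw [this]; simp
    | (N+1) =>
      -- pointwise claim on A (N+1)
      have claim : ∀ x ∈ A (N+1),
          Msup T g lam (N+1) x ≤ (g x - lam) + Msup T g lam N (T x) := by
        intro x hx
        obtain ⟨n, h1n, hnN, hle⟩ := Msup_attained hx
        obtain ⟨m, rfl⟩ := Nat.exists_eq_add_of_le h1n
        have hrw : 1 + m = m + 1 := by omega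
        rw [hrw] at hle hnN
        refine hle.trans ?_
        rw [Fsum_succ]
        exact (add_le_add_iff_left _).mpr (Fsum_le_Msup (by omega) (T x))
      -- integral chain
      have hI1 : ∫ x in A (N+1), Msup T g lam (N+1) x ∂ν
          ≤ ∫ x in A (N+1), ((g x - lam) + Msup T g lam N (T x)) ∂ν := by
        refine setIntegral_mono_on ((hintM (N+1)).integrableOn)
          (((hint_g.sub (integrable_const lam)).add (hintMT N)).integrableOn)
          (hAmeas (N+1)) claim
      have hI3 : ∫ x in A (N+1), Msup T g lam (N+1) x ∂ν = ∫ x, Msup T g lam (N+1) x ∂ν := by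
        have hcompl : ∫ x in (A (N+1))ᶜ, Msup T g lam (N+1) x ∂ν = 0 := by
          rw [setIntegral_congr_fun (hAmeas (N+1)).compl
            (fun x hx => le_antisymm (by simpa [hA] using hx) (Msup_nonneg (N+1) x))]
          · simp
        have := integral_add_compl (hAmeas (N+1)) (hintM (N+1))
        rw [hcompl, add_zero] at this
        exact this
      have hI4 : ∫ x in A (N+1), Msup T g lam N (T x) ∂ν ≤ ∫ x, Msup T g lam (N+1) x ∂ν := by
        calc ∫ x in A (N+1), Msup T g lam N (T x) ∂ν
            ≤ ∫ x, Msup T g lam N (T x) ∂ν :=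
              setIntegral_le_integral (hintMT N) (ae_of_all _ fun x => Msup_nonneg N (T x))
          _ = ∫ x, Msup T g lam N x ∂ν := hMT_int_eq N
          _ ≤ ∫ x, Msup T g lam (N+1) x ∂ν :=
              integral_mono (hintM N) (hintM (N+1)) (fun x => Msup_mono N x)
      have hsplit : ∫ x in A (N+1), ((g x - lam) + Msup T g lam N (T x)) ∂ν
          = ∫ x in A (N+1), (g x - lam) ∂ν + ∫ x in A (N+1), Msup T g lam N (T x) ∂ν :=
        integral_add ((hint_g.sub (integrable_const lam)).integrableOn) ((hintMT N).integrableOn)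
      have hmain : 0 ≤ ∫ x in A (N+1), (g x - lam) ∂ν := by
        have h := hI1
        rw [hsplit, hI3] at h
        linarith [hI4]
      have hgsplit : ∫ x in A (N+1), (g x - lam) ∂ν
          = ∫ x in A (N+1), g x ∂ν - lam * (ν (A (N+1))).toReal := by
        rw [integral_sub (hint_g.integrableOn) ((integrable_const lam).integrableOn),
          setIntegral_const]
        simp [mul_comm, Measure.real]
      have hfin : lam * (ν (A (N+1))).toReal ≤ ∫ x, g x ∂ν := by
        have h2 : lam * (ν (A (N+1))).toReal ≤ ∫ x in A (N+1), g x ∂ν := by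
          rw [hgsplit] at hmain; linarith
        exact h2.trans (setIntegral_le_integral hint_g (ae_of_all _ hg0))
      rw [ENNReal.le_ofReal_iff_toReal_le (measure_ne_top ν _) hdivnn]
      rw [le_div_iff₀ hlam]
      linarith [hfin]
  -- union
  have hEq : {x : α | ∃ n : ℕ, 1 ≤ n ∧ (n : ℝ) * lam < ∑ k ∈ Finset.range n, g (T^[k] x)}
      = ⋃ N, A N := by
    ext x
    simp only [Set.mem_setOf_eq, Set.mem_iUnion, hA]
    constructor
    · rintro ⟨n, h1n, hlt⟩
      refine ⟨n, ?_⟩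
      have hF : 0 < Fsum T g lam n x := by
        simp only [Fsum, Finset.sum_sub_distrib, Finset.sum_const, Finset.card_range,
          nsmul_eq_mul]
        linarith
      exact hF.trans_le (Fsum_le_Msup (le_refl n) x)
    · rintro ⟨N, hN⟩
      obtain ⟨n, h1n, _, hle⟩ := Msup_attained hN
      refine ⟨n, h1n, ?_⟩
      have : 0 < Fsum T g lam n x := lt_of_lt_of_le hN hle
      simp only [Fsum, Finset.sum_sub_distrib, Finset.sum_const, Finset.card_range,
        nsmul_eq_mul] at this
      linarith
  rw [hEq]
  have hmono : Monotone A := by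
    intro i j hij
    induction j with
    | zero => simp at hij; subst hij; exact le_refl _
    | succ j ih =>
      rcases Nat.lt_or_ge i (j+1) with h | h
      · exact (ih (Nat.lt_succ_iff.mp h)).trans
          (fun x hx => lt_of_lt_of_le hx (Msup_mono j x))
      · have : i = j+1 := le_antisymm hij h
        subst this; exact le_refl _
  rw [(hmono.directed_le).measure_iUnion]
  exact iSup_le key
section LawVec

variable {Ω : Type*} [MeasurableSpace Ω] {d : ℕ}

lemma measurable_vec (X : ℕ → Ω → (Fin d → ℤ)) (hmeas : ∀ i, Measurable (X i)) (k : ℕ) :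
    Measurable (fun ω (i : ℕ) => X (k + i) ω) :=
  measurable_pi_lambda _ fun i => hmeas _

lemma law_vec (P : Measure Ω) [IsProbabilityMeasure P]
    (X : ℕ → Ω → (Fin d → ℤ)) (hmeas : ∀ i, Measurable (X i))
    (hindep : iIndepFun X P)
    (hident : ∀ i, Measure.map (X i) P = Measure.map (X 0) P) (k : ℕ) :
    Measure.map (fun ω (i : ℕ) => X (k + i) ω) P
      = Measure.map (fun ω (i : ℕ) => X (0 + i) ω) P := by
  classical
  have key : ∀ (k : ℕ) (s : Finset ℕ) (t : ℕ → Set (Fin d → ℤ)),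
      (∀ i, MeasurableSet (t i)) →
      P ((fun ω (i : ℕ) => X (k + i) ω) ⁻¹' ((s : Set ℕ).pi t))
        = ∏ j ∈ s, (Measure.map (X 0) P) (t j) := by
    intro k s t ht
    have hset : ((fun ω (i : ℕ) => X (k + i) ω) ⁻¹' ((s : Set ℕ).pi t))
        = ⋂ i ∈ (s.image (fun j => k + j)), X i ⁻¹' (t (i - k)) := by
      ext ω
      simp only [Set.mem_preimage, Set.mem_pi, Set.mem_iInter, Finset.mem_image,
        Finset.mem_coe]
      constructor
      · rintro h i ⟨j, hj, rfl⟩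
        simpa [Nat.add_sub_cancel_left] using h j hj
      · intro h j hj
        have := h (k + j) ⟨j, hj, rfl⟩
        simpa [Nat.add_sub_cancel_left] using this
    rw [hset]
    rw [(iIndepFun_iff_measure_inter_preimage_eq_mul.mp hindep)
      (s.image (fun j => k + j)) (fun i _ => ht (i - k))]
    rw [Finset.prod_image (fun a _ b _ h => by omega)]
    refine Finset.prod_congr rfl fun j _ => ?_
    rw [Nat.add_sub_cancel_left, ← hident (k + j), Measure.map_apply (hmeas (k + j)) (ht j)]
  refine ext_of_generate_finite
    (squareCylinders fun _ : ℕ => {s : Set (Fin d → ℤ) | MeasurableSet s})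
    generateFrom_squareCylinders.symm
    (isPiSystem_squareCylinders
      (fun _ => by
        intro u hu v hv _
        simp only [Set.mem_setOf_eq] at hu hv ⊢
        exact hu.inter hv)
      (fun _ => by simp only [Set.mem_setOf_eq]; exact MeasurableSet.univ)) ?_ ?_
  · rintro S ⟨s, t, ht, rfl⟩
    simp only [Set.mem_univ_pi, Set.mem_setOf_eq] at ht
    have hSmeas : MeasurableSet ((s : Set ℕ).pi t) :=
      MeasurableSet.pi (Finset.countable_toSet s) fun i _ => ht i
    rw [Measure.map_apply (measurable_vec X hmeas k) hSmeas,
      Measure.map_apply (measurable_vec X hmeas 0) hSmeas, key k s t ht, key 0 s t ht]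
  · rw [Measure.map_apply (measurable_vec X hmeas k) MeasurableSet.univ,
      Measure.map_apply (measurable_vec X hmeas 0) MeasurableSet.univ]
    simp

end LawVec
section Gamma

variable {d : ℕ}

/-- shift on path space -/
def shiftSeq (d : ℕ) : (ℕ → Fin d → ℤ) → (ℕ → Fin d → ℤ) := fun y i => y (i + 1)

lemma measurable_shiftSeq : Measurable (shiftSeq d) :=
  measurable_pi_lambda _ fun i => measurable_pi_apply (i + 1)

lemma shiftSeq_iterate (k : ℕ) (y : ℕ → Fin d → ℤ) (i : ℕ) :
    (shiftSeq d)^[k] y i = y (i + k) := by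
  induction k generalizing y with
  | zero => rfl
  | succ k ih =>
    rw [Function.iterate_succ_apply, ih (shiftSeq d y)]
    show y (i + k + 1) = y (i + (k + 1))
    exact congrArg y (by omega)

/-- number of `m ∈ [lo, hi)` with `y 0 + ... + y (m-1) = 0` -/
noncomputable def gammaBand (lo hi : ℕ) (y : ℕ → Fin d → ℤ) : ℝ :=
  ∑ m ∈ Finset.Ico lo hi, if (∑ i ∈ Finset.range m, y i) = 0 then (1:ℝ) else 0

lemma measurable_partialSum (m : ℕ) :
    Measurable (fun y : ℕ → Fin d → ℤ => ∑ i ∈ Finset.range m, y i) :=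
  Finset.measurable_sum _ fun i _ => measurable_pi_apply i

lemma measurable_gammaBand (lo hi : ℕ) : Measurable (gammaBand (d := d) lo hi) := by
  apply Finset.measurable_sum
  intro m _
  exact Measurable.ite ((measurable_partialSum m) (measurableSet_singleton 0))
    measurable_const measurable_const

lemma gammaBand_nonneg (lo hi : ℕ) (y : ℕ → Fin d → ℤ) : 0 ≤ gammaBand lo hi y :=
  Finset.sum_nonneg fun m _ => by positivity

lemma gammaBand_le (lo hi : ℕ) (y : ℕ → Fin d → ℤ) : gammaBand lo hi y ≤ hi := by
  calc gammaBand lo hi y ≤ ∑ m ∈ Finset.Ico lo hi, (1:ℝ) :=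
        Finset.sum_le_sum fun m _ => by split <;> norm_num
    _ = ((hi - lo : ℕ) : ℝ) := by simp [Nat.card_Ico]
    _ ≤ hi := by
        have : (hi - lo : ℕ) ≤ hi := Nat.sub_le _ _
        exact_mod_cast this

lemma integral_gammaBand (ν : Measure (ℕ → Fin d → ℤ)) [IsProbabilityMeasure ν] (lo hi : ℕ) :
    ∫ y, gammaBand lo hi y ∂ν
      = ∑ m ∈ Finset.Ico lo hi,
          (ν {y : ℕ → Fin d → ℤ | ∑ i ∈ Finset.range m, y i = 0}).toReal := by
  unfold gammaBand
  rw [integral_finset_sum]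
  · refine Finset.sum_congr rfl fun m _ => ?_
    have hEm : MeasurableSet {y : ℕ → Fin d → ℤ | ∑ i ∈ Finset.range m, y i = 0} :=
      (measurable_partialSum m) (measurableSet_singleton 0)
    have : (fun y : ℕ → Fin d → ℤ => if (∑ i ∈ Finset.range m, y i) = 0 then (1:ℝ) else 0)
        = fun y => Set.indicator {y : ℕ → Fin d → ℤ | ∑ i ∈ Finset.range m, y i = 0}
            (fun _ => (1:ℝ)) y := by
      funext y
      rw [Set.indicator_apply]
      simp
    rw [this, integral_indicator_const (1:ℝ) hEm]
    simp [Measure.real]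
  · intro m _
    refine (integrable_const (1:ℝ)).mono' ?_ ?_
    · exact (Measurable.ite ((measurable_partialSum m) (measurableSet_singleton 0))
        measurable_const measurable_const).aestronglyMeasurable
    · refine ae_of_all _ fun y => ?_
      split <;> simp

end Gamma
section Comb

lemma band_decomp (MM : ℕ → ℕ) (hMM : ∀ j, MM j < MM (j+1)) (f : ℕ → ℝ) (J : ℕ) :
    ∑ m ∈ Finset.Ico (MM 0) (MM J), f m
      = ∑ j ∈ Finset.range J, ∑ m ∈ Finset.Ico (MM j) (MM (j+1)), f m := by
  have hmono : Monotone MM := monotone_nat_of_le_succ fun j => (hMM j).le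
  induction J with
  | zero => simp
  | succ J ih =>
    rw [Finset.sum_range_succ, ← ih,
      Finset.sum_Ico_consecutive f (hmono (Nat.zero_le J)) (hmono (Nat.le_succ J))]

lemma count_le (e : ℕ → ℕ → ℝ) (he0 : ∀ k m, 0 ≤ e k m) (he1 : ∀ k m, e k m ≤ 1)
    (MM : ℕ → ℕ) (hMM : ∀ j, MM j < MM (j+1))
    (A B J : ℕ) (hJ : B < MM J) :
    ∑ k ∈ Finset.range (A+1), ∑ m ∈ Finset.Icc (A+1-k) (B-k), e k m
      ≤ (MM 0 : ℝ) * (MM 0) +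
        ∑ j ∈ Finset.range J, ∑ k ∈ Finset.range (A+1),
          ∑ m ∈ Finset.Ico (MM j) (MM (j+1)), e k m := by
  classical
  have hsplit : ∀ k, ∑ m ∈ Finset.Icc (A+1-k) (B-k), e k m
      = (∑ m ∈ (Finset.Icc (A+1-k) (B-k)).filter (fun m => m < MM 0), e k m)
        + ∑ m ∈ (Finset.Icc (A+1-k) (B-k)).filter (fun m => ¬ m < MM 0), e k m :=
    fun k => (Finset.sum_filter_add_sum_filter_not _ _ _).symm
  have hsmall : ∑ k ∈ Finset.range (A+1),
      (∑ m ∈ (Finset.Icc (A+1-k) (B-k)).filter (fun m => m < MM 0), e k m)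
      ≤ (MM 0 : ℝ) * (MM 0) := by
    have hper : ∀ k, (∑ m ∈ (Finset.Icc (A+1-k) (B-k)).filter (fun m => m < MM 0), e k m)
        ≤ if A+1-k < MM 0 then (MM 0 : ℝ) else 0 := by
      intro k
      by_cases h : A+1-k < MM 0
      · rw [if_pos h]
        calc (∑ m ∈ (Finset.Icc (A+1-k) (B-k)).filter (fun m => m < MM 0), e k m)
            ≤ ((Finset.Icc (A+1-k) (B-k)).filter (fun m => m < MM 0)).card • (1:ℝ) :=
              Finset.sum_le_card_nsmul _ _ _ fun m _ => he1 k m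
          _ = (((Finset.Icc (A+1-k) (B-k)).filter (fun m => m < MM 0)).card : ℝ) := by simp
          _ ≤ (MM 0 : ℝ) := by
              have hsub : (Finset.Icc (A+1-k) (B-k)).filter (fun m => m < MM 0)
                  ⊆ Finset.range (MM 0) := by
                intro m hm
                rw [Finset.mem_filter] at hm
                exact Finset.mem_range.mpr hm.2
              have := Finset.card_le_card hsub
              rw [Finset.card_range] at this
              exact_mod_cast this
      · rw [if_neg h]
        have : (Finset.Icc (A+1-k) (B-k)).filter (fun m => m < MM 0) = ∅ := by
          refine Finset.eq_empty_of_forall_notMem fun m hm => ?_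
          rw [Finset.mem_filter, Finset.mem_Icc] at hm
          omega
        rw [this, Finset.sum_empty]
    calc ∑ k ∈ Finset.range (A+1),
        (∑ m ∈ (Finset.Icc (A+1-k) (B-k)).filter (fun m => m < MM 0), e k m)
        ≤ ∑ k ∈ Finset.range (A+1), (if A+1-k < MM 0 then (MM 0 : ℝ) else 0) :=
          Finset.sum_le_sum fun k _ => hper k
      _ = ∑ k ∈ (Finset.range (A+1)).filter (fun k => A+1-k < MM 0), (MM 0 : ℝ) :=
          (Finset.sum_filter _ _).symm
      _ = (((Finset.range (A+1)).filter (fun k => A+1-k < MM 0)).card : ℝ) * (MM 0 : ℝ) := by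
          rw [Finset.sum_const]; simp [mul_comm]
      _ ≤ (MM 0 : ℝ) * (MM 0) := by
          have hsub : (Finset.range (A+1)).filter (fun k => A+1-k < MM 0)
              ⊆ Finset.Ico (A+1-MM 0) (A+1) := by
            intro k hk
            rw [Finset.mem_filter, Finset.mem_range] at hk
            rw [Finset.mem_Ico]
            omega
          have hcard := Finset.card_le_card hsub
          rw [Nat.card_Ico] at hcard
          have h2 : ((Finset.range (A+1)).filter (fun k => A+1-k < MM 0)).card ≤ MM 0 := by
            omega
          have h3 : (((Finset.range (A+1)).filter (fun k => A+1-k < MM 0)).card : ℝ)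
              ≤ (MM 0 : ℝ) := by exact_mod_cast h2
          nlinarith [Nat.cast_nonneg (α := ℝ) (MM 0)]
  have hbig : ∑ k ∈ Finset.range (A+1),
      (∑ m ∈ (Finset.Icc (A+1-k) (B-k)).filter (fun m => ¬ m < MM 0), e k m)
      ≤ ∑ j ∈ Finset.range J, ∑ k ∈ Finset.range (A+1),
          ∑ m ∈ Finset.Ico (MM j) (MM (j+1)), e k m := by
    have hper : ∀ k, (∑ m ∈ (Finset.Icc (A+1-k) (B-k)).filter (fun m => ¬ m < MM 0), e k m)
        ≤ ∑ m ∈ Finset.Ico (MM 0) (MM J), e k m := by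
      intro k
      refine Finset.sum_le_sum_of_subset_of_nonneg ?_ (fun m _ _ => he0 k m)
      intro m hm
      rw [Finset.mem_filter, Finset.mem_Icc] at hm
      rw [Finset.mem_Ico]
      omega
    calc ∑ k ∈ Finset.range (A+1),
        (∑ m ∈ (Finset.Icc (A+1-k) (B-k)).filter (fun m => ¬ m < MM 0), e k m)
        ≤ ∑ k ∈ Finset.range (A+1), ∑ m ∈ Finset.Ico (MM 0) (MM J), e k m :=
          Finset.sum_le_sum fun k _ => hper k
      _ = ∑ k ∈ Finset.range (A+1), ∑ j ∈ Finset.range J,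
            ∑ m ∈ Finset.Ico (MM j) (MM (j+1)), e k m :=
          Finset.sum_congr rfl fun k _ => band_decomp MM hMM _ J
      _ = ∑ j ∈ Finset.range J, ∑ k ∈ Finset.range (A+1),
            ∑ m ∈ Finset.Ico (MM j) (MM (j+1)), e k m := Finset.sum_comm
  calc ∑ k ∈ Finset.range (A+1), ∑ m ∈ Finset.Icc (A+1-k) (B-k), e k m
      = ∑ k ∈ Finset.range (A+1),
          ((∑ m ∈ (Finset.Icc (A+1-k) (B-k)).filter (fun m => m < MM 0), e k m)
          + ∑ m ∈ (Finset.Icc (A+1-k) (B-k)).filter (fun m => ¬ m < MM 0), e k m) :=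
        Finset.sum_congr rfl fun k _ => hsplit k
    _ = (∑ k ∈ Finset.range (A+1),
          ∑ m ∈ (Finset.Icc (A+1-k) (B-k)).filter (fun m => m < MM 0), e k m)
        + ∑ k ∈ Finset.range (A+1),
          ∑ m ∈ (Finset.Icc (A+1-k) (B-k)).filter (fun m => ¬ m < MM 0), e k m :=
        Finset.sum_add_distrib
    _ ≤ _ := add_le_add hsmall hbig

end Comb
section Key

variable {Ω : Type*} [MeasurableSpace Ω]

lemma key_eps (P : Measure Ω) [IsProbabilityMeasure P] {d : ℕ}
    (X : ℕ → Ω → (Fin d → ℤ))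
    (hmeas : ∀ i, Measurable (X i))
    (hindep : iIndepFun X P)
    (hident : ∀ i, Measure.map (X i) P = Measure.map (X 0) P)
    (S : ℕ → Ω → (Fin d → ℤ))
    (hS : ∀ n ω, S n ω = ∑ i ∈ Finset.range n, X i ω)
    (htrans : ∑' n : ℕ, P {ω | S (n + 1) ω = 0} < ⊤)
    (a b : ℝ) (ha : 0 ≤ a) (hab : a < b) (ε : ℝ) (hε : 0 < ε) :
    P {ω | ¬ ∀ᶠ n : ℕ in Filter.atTop,
        (∑ k ∈ Finset.range (⌊a * (n : ℝ)⌋₊ + 1),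
          ∑ l ∈ Finset.Icc (⌊a * (n : ℝ)⌋₊ + 1) ⌊b * (n : ℝ)⌋₊,
            if S k ω = S l ω then (1 : ℝ) else 0) ≤ ε * n} = 0 := by
  classical
  -- reduce to: bounded by `ofReal δ * 2` for each `δ > 0`
  suffices hδ : ∀ δ : ℝ, 0 < δ →
      P {ω | ¬ ∀ᶠ n : ℕ in Filter.atTop,
        (∑ k ∈ Finset.range (⌊a * (n : ℝ)⌋₊ + 1),
          ∑ l ∈ Finset.Icc (⌊a * (n : ℝ)⌋₊ + 1) ⌊b * (n : ℝ)⌋₊,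
            if S k ω = S l ω then (1 : ℝ) else 0) ≤ ε * n} ≤ ENNReal.ofReal δ * 2 by
    refine le_antisymm ?_ zero_le'
    refine ENNReal.le_of_forall_pos_le_add fun ε' hε' _ => ?_
    rw [zero_add]
    have hε'R : (0:ℝ) < (ε' : ℝ) := hε'
    calc P _ ≤ ENNReal.ofReal ((ε' : ℝ)/2) * 2 := hδ ((ε' : ℝ)/2) (by positivity)
      _ = ENNReal.ofReal ((ε' : ℝ)/2) * ENNReal.ofReal 2 := by
          rw [ENNReal.ofReal_ofNat]
      _ = ENNReal.ofReal ((ε' : ℝ)/2 * 2) := (ENNReal.ofReal_mul (by positivity)).symm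
      _ = ENNReal.ofReal (ε' : ℝ) := by norm_num
      _ = (ε' : ENNReal) := ENNReal.ofReal_coe_nnreal
  intro δ hδpos
  -- the increment-sequence map and its law
  set vec0 : Ω → (ℕ → Fin d → ℤ) := fun ω i => X (0 + i) ω with hvec0
  have hvec0meas : Measurable vec0 := measurable_vec X hmeas 0
  set ν : Measure (ℕ → Fin d → ℤ) := Measure.map vec0 P with hν
  haveI : IsProbabilityMeasure ν := Measure.isProbabilityMeasure_map hvec0meas.aemeasurable
  -- shift invariance
  have hshift : Measure.map (shiftSeq d) ν = ν := by
    rw [hν, Measure.map_map measurable_shiftSeq hvec0meas]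
    have hcomp : (shiftSeq d) ∘ vec0 = fun ω (i : ℕ) => X (1 + i) ω := by
      funext ω i
      show X (0 + (i + 1)) ω = X (1 + i) ω
      exact congrArg (fun t => X t ω) (by omega)
    rw [hcomp, law_vec P X hmeas hindep hident 1]
  -- return probabilities and tails
  set p : ℕ → ℝ := fun m => (P {ω | S m ω = 0}).toReal with hp
  have hq : Summable (fun n => p (n + 1)) := ENNReal.summable_toReal htrans.ne
  have hp0 : ∀ m, 0 ≤ p m := fun m => ENNReal.toReal_nonneg
  set tail' : ℕ → ℝ := fun i => ∑' (k : ℕ), p (k + i + 1) with htaildef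
  have htail : Filter.Tendsto tail' Filter.atTop (nhds 0) :=
    tendsto_sum_nat_add (fun n => p (n + 1))
  -- parameters
  have ha1 : (0:ℝ) < a + 1 := by linarith
  set c : ℝ := ε / (4 * (a + 1)) with hcdef
  have hc : 0 < c := by positivity
  set lam : ℕ → ℝ := fun j => c * (1/2)^j with hlamdef
  have hlam : ∀ j, 0 < lam j := fun j => by
    rw [hlamdef]; positivity
  -- choose band cutoffs
  have hKex : ∀ j : ℕ, ∃ N, ∀ t ≥ N, tail' t ≤ δ * lam j * (1/2)^j := by
    intro j
    have hpos : (0:ℝ) < δ * lam j * (1/2)^j := by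
      have := hlam j; positivity
    have hev := htail.eventually_lt_const hpos
    obtain ⟨N, hN⟩ := Filter.eventually_atTop.mp hev
    exact ⟨N, fun t ht => (hN t ht).le⟩
  set r : ℕ → ℕ := fun j => (hKex j).choose with hrdef
  have hr : ∀ j, ∀ t ≥ r j, tail' t ≤ δ * lam j * (1/2)^j := fun j => (hKex j).choose_spec
  set K : ℕ → ℕ := fun j => Nat.rec (r 0) (fun j' Kj => max (Kj + 1) (r (j'+1))) j with hKdef
  have hKs : ∀ j, K (j+1) = max (K j + 1) (r (j+1)) := fun _ => rfl
  have hKr : ∀ j, r j ≤ K j := by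
    intro j
    cases j with
    | zero => exact le_refl _
    | succ j => rw [hKs j]; exact le_max_right _ _
  have hKlt : ∀ j, K j < K (j+1) := fun j => by
    rw [hKs j]; exact lt_of_lt_of_le (Nat.lt_succ_self _) (le_max_left _ _)
  have hKge : ∀ j, j ≤ K j := by
    intro j
    induction j with
    | zero => exact Nat.zero_le _
    | succ j ih => exact lt_of_le_of_lt ih (hKlt j)
  have htailK : ∀ j, tail' (K j) ≤ δ * lam j * (1/2)^j := fun j => hr j (K j) (hKr j)
  set MM : ℕ → ℕ := fun j => K j + 1 with hMMdef
  have hMM : ∀ j, MM j < MM (j+1) := fun j => Nat.succ_lt_succ (hKlt j)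
  have hMMval : ∀ j, MM j = K j + 1 := fun _ => rfl
  -- band functions and their means
  have hγint : ∀ j, ∫ y, gammaBand (MM j) (MM (j+1)) y ∂ν
      = ∑ m ∈ Finset.Ico (MM j) (MM (j+1)), p m := by
    intro j
    rw [integral_gammaBand]
    refine Finset.sum_congr rfl fun m _ => ?_
    have hEm : MeasurableSet {y : ℕ → Fin d → ℤ | ∑ i ∈ Finset.range m, y i = 0} :=
      (measurable_partialSum m) (measurableSet_singleton 0)
    rw [hν, Measure.map_apply hvec0meas hEm]
    congr 1
    congr 1
    ext ω
    simp only [Set.mem_preimage, Set.mem_setOf_eq, hvec0]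
    rw [hS m ω]
    constructor
    · intro h
      rw [← h]
      exact Finset.sum_congr rfl fun i _ => congrArg (fun t => X t ω) (by omega)
    · intro h
      rw [← h]
      exact Finset.sum_congr rfl fun i _ => congrArg (fun t => X t ω) (by omega)
  have hγmean_le : ∀ j, ∑ m ∈ Finset.Ico (MM j) (MM (j+1)), p m ≤ tail' (K j) := by
    intro j
    rw [Finset.sum_Ico_eq_sum_range]
    have hsummable : Summable (fun t : ℕ => p (t + K j + 1)) :=
      (summable_nat_add_iff (f := fun n => p (n + 1)) (K j)).mpr hq
    calc ∑ t ∈ Finset.range (MM (j+1) - MM j), p (MM j + t)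
        = ∑ t ∈ Finset.range (MM (j+1) - MM j), p (t + K j + 1) :=
          Finset.sum_congr rfl fun t _ => congrArg p (by
            have h1 : MM j = K j + 1 := rfl
            omega)
      _ ≤ ∑' t : ℕ, p (t + K j + 1) :=
          Summable.sum_le_tsum _ (fun t _ => hp0 _) hsummable
      _ = tail' (K j) := rfl
  -- bad events via the maximal ergodic inequality
  set BadL : ℕ → Set (ℕ → Fin d → ℤ) := fun j =>
    {y | ∃ n : ℕ, 1 ≤ n ∧ (n : ℝ) * lam j
      < ∑ k ∈ Finset.range n, gammaBand (MM j) (MM (j+1)) ((shiftSeq d)^[k] y)} with hBadLdef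
  have hBadLmeas : ∀ j, MeasurableSet (BadL j) := by
    intro j
    have : BadL j = ⋃ n : ℕ, {y | 1 ≤ n ∧ (n : ℝ) * lam j
        < ∑ k ∈ Finset.range n, gammaBand (MM j) (MM (j+1)) ((shiftSeq d)^[k] y)} := by
      rw [hBadLdef]; ext y; simp [Set.mem_iUnion]
    rw [this]
    refine MeasurableSet.iUnion fun n => ?_
    rw [Set.setOf_and]
    refine MeasurableSet.inter (MeasurableSet.const _) ?_
    exact measurableSet_lt measurable_const
      (Finset.measurable_sum _ fun k _ =>
        (measurable_gammaBand _ _).comp (measurable_shiftSeq.iterate k))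
  have hBadL_bound : ∀ j, ν (BadL j) ≤ ENNReal.ofReal (δ * (1/2)^j) := by
    intro j
    have hmax := maximal_ergodic ν (shiftSeq d) measurable_shiftSeq hshift
      (gammaBand (MM j) (MM (j+1))) (measurable_gammaBand _ _)
      (gammaBand_nonneg _ _) ((MM (j+1) : ℝ)) (gammaBand_le _ _) (hlam j)
    refine le_trans hmax ?_
    refine ENNReal.ofReal_le_ofReal ?_
    rw [div_le_iff₀ (hlam j)]
    calc ∫ y, gammaBand (MM j) (MM (j+1)) y ∂ν
        = ∑ m ∈ Finset.Ico (MM j) (MM (j+1)), p m := hγint j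
      _ ≤ tail' (K j) := hγmean_le j
      _ ≤ δ * lam j * (1/2)^j := htailK j
      _ = δ * (1/2)^j * lam j := by ring
  -- union bound
  set Bad : ℕ → Set Ω := fun j => vec0 ⁻¹' (BadL j) with hBaddef
  have hBadP : ∀ j, P (Bad j) ≤ ENNReal.ofReal (δ * (1/2)^j) := by
    intro j
    rw [hBaddef, ← Measure.map_apply hvec0meas (hBadLmeas j), ← hν]
    exact hBadL_bound j
  have hUnion : P (⋃ j, Bad j) ≤ ENNReal.ofReal δ * 2 := by
    refine le_trans (measure_iUnion_le _) ?_
    have hterm : ∀ j : ℕ, P (Bad j) ≤ ENNReal.ofReal δ * (ENNReal.ofReal (1/2))^j := by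
      intro j
      refine le_trans (hBadP j) ?_
      rw [← ENNReal.ofReal_pow (by norm_num), ← ENNReal.ofReal_mul hδpos.le]
    refine le_trans (ENNReal.tsum_le_tsum hterm) ?_
    rw [ENNReal.tsum_mul_left, ENNReal.tsum_geometric]
    have h12 : ENNReal.ofReal (1/2 : ℝ) = 2⁻¹ := by
      rw [show (1/2 : ℝ) = 2⁻¹ by norm_num, ENNReal.ofReal_inv_of_pos (by norm_num),
        ENNReal.ofReal_ofNat]
    rw [h12, ENNReal.one_sub_inv_two, inv_inv]
  -- on the good event, the count is eventually small
  have hGood : ∀ ω, ω ∉ (⋃ j, Bad j) → ∀ᶠ n : ℕ in Filter.atTop,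
      (∑ k ∈ Finset.range (⌊a * (n : ℝ)⌋₊ + 1),
        ∑ l ∈ Finset.Icc (⌊a * (n : ℝ)⌋₊ + 1) ⌊b * (n : ℝ)⌋₊,
          if S k ω = S l ω then (1 : ℝ) else 0) ≤ ε * n := by
    intro ω hω
    have hg : ∀ (j : ℕ) (n : ℕ), (n : ℝ) * lam j
        ≥ ∑ k ∈ Finset.range n, gammaBand (MM j) (MM (j+1)) ((shiftSeq d)^[k] (vec0 ω)) := by
      intro j n
      rcases Nat.eq_zero_or_pos n with rfl | hn
      · simp
      simp only [Set.mem_iUnion, not_exists] at hω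
      have := hω j
      rw [hBaddef, Set.mem_preimage, hBadLdef, Set.mem_setOf_eq] at this
      push_neg at this
      exact this n hn
    set n₀ : ℕ := max 1 (Nat.ceil ((MM 0 : ℝ) * (MM 0) * 2 / ε)) with hn₀def
    rw [Filter.eventually_atTop]
    refine ⟨n₀, fun n hn => ?_⟩
    have hn1 : 1 ≤ n := le_trans (le_max_left _ _) hn
    have hnM : (MM 0 : ℝ) * (MM 0) ≤ ε * n / 2 := by
      have h1 : Nat.ceil ((MM 0 : ℝ) * (MM 0) * 2 / ε) ≤ n := le_trans (le_max_right _ _) hn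
      have h2 : (MM 0 : ℝ) * (MM 0) * 2 / ε ≤ n := by
        refine le_trans (Nat.le_ceil _) ?_
        exact_mod_cast h1
      rw [div_le_iff₀ hε] at h2
      linarith
    set A : ℕ := ⌊a * (n : ℝ)⌋₊ with hAdef
    set B : ℕ := ⌊b * (n : ℝ)⌋₊ with hBdef
    have hABle : A ≤ B := by
      refine Nat.floor_le_floor ?_
      have : (0:ℝ) ≤ n := Nat.cast_nonneg n
      nlinarith
    -- rewrite the double sum
    set e : ℕ → ℕ → ℝ := fun k m =>
      if (∑ i ∈ Finset.range m, X (k + i) ω) = 0 then (1:ℝ) else 0 with hedef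
    have hSiff : ∀ k m, (S k ω = S (k+m) ω) ↔ (∑ i ∈ Finset.range m, X (k + i) ω = 0) := by
      intro k m
      rw [hS k ω, hS (k+m) ω]
      have hdec : ∑ i ∈ Finset.range (k+m), X i ω
          = ∑ i ∈ Finset.range k, X i ω + ∑ i ∈ Finset.range m, X (k + i) ω := by
        have h2 : ∑ i ∈ Finset.Ico 0 k, X i ω + ∑ i ∈ Finset.Ico k (k+m), X i ω
            = ∑ i ∈ Finset.Ico 0 (k+m), X i ω :=
          Finset.sum_Ico_consecutive _ (Nat.zero_le k) (Nat.le_add_right k m)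
        have h1 : ∑ i ∈ Finset.Ico k (k+m), X i ω = ∑ i ∈ Finset.range m, X (k+i) ω := by
          rw [Finset.sum_Ico_eq_sum_range, Nat.add_sub_cancel_left]
        calc ∑ i ∈ Finset.range (k+m), X i ω
            = ∑ i ∈ Finset.Ico 0 (k+m), X i ω := by rw [Finset.range_eq_Ico]
          _ = ∑ i ∈ Finset.Ico 0 k, X i ω + ∑ i ∈ Finset.Ico k (k+m), X i ω := h2.symm
          _ = ∑ i ∈ Finset.range k, X i ω + ∑ i ∈ Finset.range m, X (k+i) ω := by
              rw [← Finset.range_eq_Ico, h1]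
      rw [hdec]
      exact left_eq_add
    have hrw : (∑ k ∈ Finset.range (A + 1), ∑ l ∈ Finset.Icc (A + 1) B,
        if S k ω = S l ω then (1 : ℝ) else 0)
        = ∑ k ∈ Finset.range (A+1), ∑ m ∈ Finset.Icc (A+1-k) (B-k), e k m := by
      refine Finset.sum_congr rfl fun k hk => ?_
      have hkA : k ≤ A := Nat.lt_succ_iff.mp (Finset.mem_range.mp hk)
      have hIcc : Finset.Icc (A+1) B = Finset.map (addLeftEmbedding k)
          (Finset.Icc (A+1-k) (B-k)) := by
        rw [Finset.map_add_left_Icc]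
        congr 1 <;> omega
      rw [hIcc, Finset.sum_map]
      refine Finset.sum_congr rfl fun m hm => ?_
      have hemb : addLeftEmbedding k m = k + m := rfl
      rw [hemb]
      show _ = if (∑ i ∈ Finset.range m, X (k + i) ω) = 0 then (1:ℝ) else 0
      exact if_congr (hSiff k m) rfl rfl
    rw [hrw]
    -- apply the combinatorial bound
    have he0 : ∀ k m, 0 ≤ e k m := fun k m => by
      show (0:ℝ) ≤ if (∑ i ∈ Finset.range m, X (k + i) ω) = 0 then (1:ℝ) else 0
      positivity
    have he1 : ∀ k m, e k m ≤ 1 := fun k m => by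
      show (if (∑ i ∈ Finset.range m, X (k + i) ω) = 0 then (1:ℝ) else 0) ≤ 1
      split <;> norm_num
    have hJ : B < MM (B+1) := by
      have h0 := hKge (B+1)
      have h1 : MM (B+1) = K (B+1) + 1 := rfl
      omega
    refine le_trans (count_le e he0 he1 MM hMM A B (B+1) hJ) ?_
    -- band sums are controlled
    have hband : ∀ j, (∑ k ∈ Finset.range (A+1),
        ∑ m ∈ Finset.Ico (MM j) (MM (j+1)), e k m) ≤ ((A:ℝ)+1) * lam j := by
      intro j
      have heq : ∀ k, (∑ m ∈ Finset.Ico (MM j) (MM (j+1)), e k m)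
          = gammaBand (MM j) (MM (j+1)) ((shiftSeq d)^[k] (vec0 ω)) := by
        intro k
        show _ = ∑ m ∈ Finset.Ico (MM j) (MM (j+1)),
          if (∑ i ∈ Finset.range m, ((shiftSeq d)^[k] (vec0 ω)) i) = 0 then (1:ℝ) else 0
        refine Finset.sum_congr rfl fun m _ => ?_
        have hsum : ∑ i ∈ Finset.range m, ((shiftSeq d)^[k] (vec0 ω)) i
            = ∑ i ∈ Finset.range m, X (k + i) ω := by
          refine Finset.sum_congr rfl fun i _ => ?_
          rw [shiftSeq_iterate]
          show X (0 + (i + k)) ω = X (k + i) ω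
          exact congrArg (fun t => X t ω) (by omega)
        show (if (∑ i ∈ Finset.range m, X (k + i) ω) = 0 then (1:ℝ) else 0) = _
        rw [hsum]
      calc (∑ k ∈ Finset.range (A+1), ∑ m ∈ Finset.Ico (MM j) (MM (j+1)), e k m)
          = ∑ k ∈ Finset.range (A+1),
              gammaBand (MM j) (MM (j+1)) ((shiftSeq d)^[k] (vec0 ω)) :=
            Finset.sum_congr rfl fun k _ => heq k
        _ ≤ ((A+1 : ℕ) : ℝ) * lam j := ge_iff_le.mp (hg j (A+1))
        _ = ((A:ℝ)+1) * lam j := by push_cast; ring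
    have hA1 : ((A:ℝ)+1) ≤ (a+1) * n := by
      have h1 : (A:ℝ) ≤ a * n := by
        rw [hAdef]
        exact Nat.floor_le (mul_nonneg ha (Nat.cast_nonneg n))
      have h2 : (1:ℝ) ≤ n := by exact_mod_cast hn1
      nlinarith
    have hgeom : ∑ j ∈ Finset.range (B+1), ((1:ℝ)/2)^j ≤ 2 := by
      have hsum2 : ∑' j : ℕ, ((1:ℝ)/2)^j = 2 := by
        rw [tsum_geometric_of_lt_one (by norm_num) (by norm_num)]
        norm_num
      exact le_trans (Summable.sum_le_tsum _ (fun i _ => by positivity)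
        (summable_geometric_of_lt_one (by norm_num) (by norm_num))) (le_of_eq hsum2)
    calc (MM 0 : ℝ) * (MM 0) + ∑ j ∈ Finset.range (B+1), ∑ k ∈ Finset.range (A+1),
          ∑ m ∈ Finset.Ico (MM j) (MM (j+1)), e k m
        ≤ ε * n / 2 + ∑ j ∈ Finset.range (B+1), ((A:ℝ)+1) * lam j :=
          add_le_add hnM (Finset.sum_le_sum fun j _ => hband j)
      _ = ε * n / 2 + ((A:ℝ)+1) * c * ∑ j ∈ Finset.range (B+1), ((1:ℝ)/2)^j := by
          rw [Finset.mul_sum]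
          congr 1
          refine Finset.sum_congr rfl fun j _ => ?_
          rw [hlamdef]
          ring
      _ ≤ ε * n / 2 + ((a+1) * n) * c * 2 := by
          have hAc : (0:ℝ) ≤ ((A:ℝ)+1) * c := by positivity
          have h1 : ((A:ℝ)+1) * c * ∑ j ∈ Finset.range (B+1), ((1:ℝ)/2)^j
              ≤ ((A:ℝ)+1) * c * 2 := by
            exact mul_le_mul_of_nonneg_left hgeom hAc
          have h2 : ((A:ℝ)+1) * c * 2 ≤ ((a+1) * n) * c * 2 := by
            have := hA1
            nlinarith
          linarith
      _ = ε * n / 2 + ε * n / 2 := by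
          rw [hcdef]
          field_simp
          ring
      _ = ε * n := by ring
  -- conclude
  refine le_trans (measure_mono ?_) hUnion
  intro ω hω
  rw [Set.mem_setOf_eq] at hω
  by_contra h
  exact hω (hGood ω h)

end Key
end Stmt11Aux

open Stmt11Aux in
theorem stmt_11
    {Ω : Type*} [MeasurableSpace Ω] (P : Measure Ω) [IsProbabilityMeasure P]
    (d : ℕ) (hd : 1 ≤ d)
    (X : ℕ → Ω → (Fin d → ℤ))
    (hmeas : ∀ i, Measurable (X i))
    (hindep : iIndepFun X P)
    (hident : ∀ i, Measure.map (X i) P = Measure.map (X 0) P)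
    (S : ℕ → Ω → (Fin d → ℤ))
    (hS : ∀ n ω, S n ω = ∑ i ∈ Finset.range n, X i ω)
    (htrans : ∑' n : ℕ, P {ω | S (n + 1) ω = 0} < ⊤)
 :
    ∀ a b : ℝ, 0 ≤ a → a < b → ∀ᵐ ω ∂P, Tendsto
      (fun n : ℕ => (∑ k ∈ Finset.range (⌊a * (n : ℝ)⌋₊ + 1),
          ∑ l ∈ Finset.Icc (⌊a * (n : ℝ)⌋₊ + 1) ⌊b * (n : ℝ)⌋₊,
            if S k ω = S l ω then (1 : ℝ) else 0) / n) atTop (nhds 0) := by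
  intro a b ha hab
  have hae : ∀ j : ℕ, ∀ᵐ ω ∂P, ∀ᶠ n : ℕ in atTop,
      (∑ k ∈ Finset.range (⌊a * (n : ℝ)⌋₊ + 1),
        ∑ l ∈ Finset.Icc (⌊a * (n : ℝ)⌋₊ + 1) ⌊b * (n : ℝ)⌋₊,
          if S k ω = S l ω then (1 : ℝ) else 0) ≤ (1 / ((j:ℝ) + 1)) * n := by
    intro j
    have hkey := key_eps P X hmeas hindep hident S hS htrans a b ha hab
      (1 / ((j:ℝ) + 1)) (by positivity)
    rw [ae_iff]
    exact hkey
  have hall := ae_all_iff.mpr hae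
  filter_upwards [hall] with ω hω
  have hnonneg : ∀ n : ℕ, 0 ≤ (∑ k ∈ Finset.range (⌊a * (n : ℝ)⌋₊ + 1),
      ∑ l ∈ Finset.Icc (⌊a * (n : ℝ)⌋₊ + 1) ⌊b * (n : ℝ)⌋₊,
        if S k ω = S l ω then (1 : ℝ) else 0) := by
    intro n
    refine Finset.sum_nonneg fun k _ => Finset.sum_nonneg fun l _ => ?_
    split <;> norm_num
  rw [Metric.tendsto_atTop]
  intro ε hε
  obtain ⟨j, hj⟩ := exists_nat_one_div_lt hε
  obtain ⟨N, hN⟩ := eventually_atTop.mp (hω j)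
  refine ⟨max N 1, fun n hn => ?_⟩
  have hn1 : 1 ≤ n := le_trans (le_max_right _ _) hn
  have hnN : N ≤ n := le_trans (le_max_left _ _) hn
  have hc := hN n hnN
  have hnpos : (0:ℝ) < n := by exact_mod_cast hn1
  rw [Real.dist_eq, sub_zero, abs_of_nonneg (div_nonneg (hnonneg n) hnpos.le)]
  have hdiv : (∑ k ∈ Finset.range (⌊a * (n : ℝ)⌋₊ + 1),
      ∑ l ∈ Finset.Icc (⌊a * (n : ℝ)⌋₊ + 1) ⌊b * (n : ℝ)⌋₊,
        if S k ω = S l ω then (1 : ℝ) else 0) / n ≤ 1 / ((j:ℝ) + 1) := by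
    rw [div_le_iff₀ hnpos]
    calc _ ≤ (1 / ((j:ℝ) + 1)) * n := hc
      _ = 1 / ((j:ℝ) + 1) * n := by ring
  exact lt_of_le_of_lt hdiv hj
end
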